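/- arXiv:1804.06959 — 4 statements merged into one kernel-verified Lean document; each statement's English description precedes it below -/
import Mathlib

section
/- There exists a function g : ℕ × ℕ → ℕ such that for all positive integers t and q, if M is a finite matroid with the (t,2t)-property and |E(M)| ≥ g(t,q), then for some M' ∈ {M, M*} the matroid M' has t − 1 pairwise disjoint cocircuits C*₁, …, C*_{t−1}, and there is a set Z ⊆ E(M') − ⋃_{i=1}^{t−1} C*_i such that (1) the rank of Z in M' is at least q, and (2) for each z ∈ Z there exists z' ∈ Z − {z} such that each C*_i contains a 2-element subset {x_i, x_i'} for which {z, z'} ∪ ⋃_{i=1}^{t−1}{x_i, x_i'} is a circuit of M'. -/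
open Set

/-- A circuit of a matroid: a minimal dependent set. -/
def IsCircuit {α : Type*} (M : Matroid α) (C : Set α) : Prop :=
  M.Dep C ∧ ∀ D, D ⊂ C → ¬ M.Dep D

/-- A cocircuit of a matroid: a circuit of the dual. -/
def IsCocircuit {α : Type*} (M : Matroid α) (C : Set α) : Prop :=
  IsCircuit M✶ C

/-- `M` has the `(t,ℓ)`-property: every `t`-element subset of the ground set is contained
in an `ℓ`-element circuit and an `ℓ`-element cocircuit. -/
def HasTLProperty {α : Type*} (M : Matroid α) (t ℓ : ℕ) : Prop :=
  ∀ X ⊆ M.E, X.ncard = t →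
    (∃ C, IsCircuit M C ∧ C.ncard = ℓ ∧ X ⊆ C) ∧
    (∃ C, IsCocircuit M C ∧ C.ncard = ℓ ∧ X ⊆ C)

/-- The rank of a set in a matroid: the maximum cardinality of an independent subset. -/
noncomputable def rk {α : Type*} (M : Matroid α) (X : Set α) : ℕ :=
  sSup {n | ∃ I, I ⊆ X ∧ M.Indep I ∧ I.ncard = n}

variable {α : Type*} {M : Matroid α} {C D C₁ C₂ K : Set α} {e : α}

lemma IsCircuit.subset_ground (h : IsCircuit M C) : C ⊆ M.E := h.1.subset_ground
lemma IsCircuit.nonempty (h : IsCircuit M C) : C.Nonempty := h.1.nonempty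
lemma IsCircuit.ssubset_indep (h : IsCircuit M C) (hD : D ⊂ C) : M.Indep D := by
  have hDE : D ⊆ M.E := hD.subset.trans h.subset_ground
  by_contra hi
  exact h.2 D hD ⟨hi, hDE⟩
lemma IsCircuit.diff_singleton_indep (h : IsCircuit M C) (he : e ∈ C) : M.Indep (C \ {e}) :=
  h.ssubset_indep (sdiff_singleton_ssubset.2 he)
lemma IsCircuit.mem_closure_diff_singleton (h : IsCircuit M C) (he : e ∈ C) :
    e ∈ M.closure (C \ {e}) := by
  have hi := h.diff_singleton_indep he
  have hd : M.Dep (insert e (C \ {e})) := by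
    rw [insert_diff_singleton, insert_eq_of_mem he]; exact h.1
  exact ((hi.insert_dep_iff).1 hd).1
lemma IsCircuit.eq_of_subset (h : IsCircuit M C) (h' : IsCircuit M D) (hCD : C ⊆ D) : C = D := by
  by_contra hne
  exact h'.2 C (ssubset_of_ne_of_subset hne hCD) h.1
lemma exists_circuit_subset_of_dep (hE : M.E.Finite) (hD : M.Dep D) :
    ∃ C, C ⊆ D ∧ IsCircuit M C := by
  have hDfin : D.Finite := hE.subset hD.subset_ground
  obtain ⟨n, hn⟩ : ∃ n, D.ncard = n := ⟨_, rfl⟩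
  induction n using Nat.strong_induction_on generalizing D with
  | _ n IH =>
    by_cases hmin : ∀ D', D' ⊂ D → ¬ M.Dep D'
    · exact ⟨D, Subset.rfl, hD, hmin⟩
    · push_neg at hmin
      obtain ⟨D', hss, hD'⟩ := hmin
      obtain ⟨C, hCD', hC⟩ := IH (D'.ncard) (hn ▸ Set.ncard_lt_ncard hss hDfin) hD'
        (hDfin.subset hss.subset) rfl
      exact ⟨C, hCD'.trans hss.subset, hC⟩

lemma circuit_elimination (hE : M.E.Finite) (h₁ : IsCircuit M C₁) (h₂ : IsCircuit M C₂)
    (hne : C₁ ≠ C₂) (he : e ∈ C₁ ∩ C₂) :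
    ∃ C, IsCircuit M C ∧ C ⊆ (C₁ ∪ C₂) \ {e} := by
  set X := C₁ ∪ C₂ with hX
  have hXE : X ⊆ M.E := union_subset h₁.subset_ground h₂.subset_ground
  have hXfin : X.Finite := hE.subset hXE
  have heX : e ∈ X := Or.inl he.1
  suffices hdep : M.Dep (X \ {e}) by
    obtain ⟨C, hCsub, hC⟩ := exists_circuit_subset_of_dep hE hdep
    exact ⟨C, hC, hCsub⟩
  have hsub : X \ {e} ⊆ M.E := (diff_subset).trans hXE
  rw [← Matroid.not_indep_iff hsub]
  intro hI
  -- X \ {e} is a basis of X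
  have hXcl : X ⊆ M.closure (X \ {e}) := by
    intro x hx
    rcases eq_or_ne x e with rfl | hxe
    · exact M.closure_subset_closure
        (diff_subset_diff_left subset_union_left) (h₁.mem_closure_diff_singleton he.1)
    · exact M.subset_closure _ hsub ⟨hx, hxe⟩
  have hIbasis : M.IsBasis (X \ {e}) X := hI.isBasis_of_subset_of_subset_closure diff_subset hXcl
  -- pick g ∈ C₂ \ C₁
  have hns : ¬ C₂ ⊆ C₁ := fun hsub' => hne (h₂.eq_of_subset h₁ hsub').symm
  obtain ⟨g, hgC₂, hgC₁⟩ := not_subset.1 hns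
  have hI₂ : M.Indep (C₂ \ {g}) := h₂.diff_singleton_indep hgC₂
  obtain ⟨B, hB, hC₂B⟩ := hI₂.subset_isBasis_of_subset
    ((diff_subset).trans subset_union_right) hXE
  have hcard := hIbasis.encard_eq_encard hB
  have hBfin : B.Finite := hXfin.subset hB.subset
  have h1 : (X \ B).encard + B.encard = X.encard := encard_diff_add_encard_of_subset hB.subset
  have h2 : (X \ {e}).encard + 1 = X.encard := encard_diff_singleton_add_one heX
  have hXB1 : (X \ B).encard = 1 := by
    rw [hcard] at h2
    rw [← h2] at h1
    rw [add_comm B.encard 1] at h1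
    have := hBfin.encard_lt_top.ne
    exact WithTop.add_right_cancel this h1
  obtain ⟨g', hg'⟩ := encard_eq_one.1 hXB1
  have hg'XB : g' ∈ X \ B := hg'.symm ▸ rfl
  have hBeq : B = X \ {g'} := by
    apply Set.eq_of_subset_of_subset
    · intro b hb
      exact ⟨hB.subset hb, fun hbg => (hg'XB.2 ((mem_singleton_iff.1 hbg) ▸ hb)).elim⟩
    · intro x hx
      by_contra hxB
      have : x ∈ X \ B := ⟨hx.1, hxB⟩
      rw [hg'] at this
      exact hx.2 this
  rcases eq_or_ne g' g with rfl | hgg'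
  · have hC₁B : C₁ ⊆ B := by
      rw [hBeq]
      exact fun x hx => ⟨Or.inl hx, fun hxg => hgC₁ ((mem_singleton_iff.1 hxg) ▸ hx)⟩
    exact h₁.1.not_indep (hB.indep.subset hC₁B)
  · have hg'C₂ : g' ∉ C₂ := by
      intro hmem
      have : g' ∈ C₂ \ {g} := ⟨hmem, hgg'⟩
      exact hg'XB.2 (hC₂B this)
    have hC₂B' : C₂ ⊆ B := by
      rw [hBeq]
      exact fun x hx => ⟨Or.inr hx, fun hxg => hg'C₂ ((mem_singleton_iff.1 hxg) ▸ hx)⟩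
    exact h₂.1.not_indep (hB.indep.subset hC₂B')

lemma circuit_cocircuit_inter_ne_singleton (hC : IsCircuit M C) (hK : IsCircuit M✶ K)
    (h : C ∩ K = {e}) : False := by
  have heC : e ∈ C := (h ▸ (rfl : e ∈ ({e} : Set α)) : e ∈ C ∩ K).1
  have heK : e ∈ K := (h ▸ (rfl : e ∈ ({e} : Set α)) : e ∈ C ∩ K).2
  have hKE : K ⊆ M.E := hK.subset_ground
  have hCe_sub : C \ {e} ⊆ M.E \ K := by
    intro c hc
    refine ⟨hC.subset_ground hc.1, fun hcK => hc.2 ?_⟩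
    have : c ∈ C ∩ K := ⟨hc.1, hcK⟩
    rwa [h] at this
  have h1 : e ∈ M.closure (M.E \ K) :=
    M.closure_subset_closure hCe_sub (hC.mem_closure_diff_singleton heC)
  have h2 := Matroid.closure_insert_eq_of_mem_closure h1
  have hins : insert e (M.E \ K) = M.E \ (K \ {e}) := by
    ext x
    simp only [mem_insert_iff, mem_diff, mem_singleton_iff]
    constructor
    · rintro (rfl | ⟨hx1, hx2⟩)
      · exact ⟨hC.subset_ground heC, fun hh => hh.2 rfl⟩
      · exact ⟨hx1, fun hh => hx2 hh.1⟩
    · rintro ⟨hx1, hx2⟩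
      by_cases hxe : x = e
      · exact Or.inl hxe
      · exact Or.inr ⟨hx1, fun hxK => hx2 ⟨hxK, hxe⟩⟩
  have hcoind : M.Coindep (K \ {e}) := Matroid.coindep_def.2 (hK.diff_singleton_indep heK)
  have hspan : M.Spanning (M.E \ (K \ {e})) := hcoind.compl_spanning
  have hclEK : M.closure (M.E \ K) = M.E := by
    rw [← h2, hins, hspan.closure_eq]
  have hspan' : M.Spanning (M.E \ K) := by
    rw [Matroid.spanning_iff_closure_eq diff_subset]
    exact hclEK
  have : M.Coindep K := by
    have := (Matroid.spanning_iff_compl_coindep diff_subset).1 hspan'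
    rwa [diff_diff_cancel_left hKE] at this
  exact hK.1.not_indep this

variable {α : Type*} {ι : Type*}

lemma ncard_fbiUnion_le (s : Finset ι) (f : ι → Set α) (u : ℕ)
    (hfin : ∀ i ∈ s, (f i).Finite) (hb : ∀ i ∈ s, (f i).ncard ≤ u) :
    (⋃ i ∈ s, f i).ncard ≤ s.card * u := by
  induction s using Finset.cons_induction_on with
  | empty => simp
  | cons a s ha IH =>
    have hrw : (⋃ i ∈ Finset.cons a s ha, f i) = f a ∪ ⋃ i ∈ s, f i := by
      ext x
      simp only [Set.mem_iUnion, Finset.mem_cons, Set.mem_union]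
      constructor
      · rintro ⟨i, (rfl | hi), hx⟩
        · exact Or.inl hx
        · exact Or.inr ⟨i, hi, hx⟩
      · rintro (hx | ⟨i, hi, hx⟩)
        · exact ⟨a, Or.inl rfl, hx⟩
        · exact ⟨i, Or.inr hi, hx⟩
    rw [hrw]
    calc (f a ∪ ⋃ i ∈ s, f i).ncard ≤ (f a).ncard + (⋃ i ∈ s, f i).ncard :=
          Set.ncard_union_le _ _
      _ ≤ u + s.card * u := by
          refine Nat.add_le_add (hb a (Finset.mem_cons_self a s)) ?_
          exact IH (fun i hi => hfin i (Finset.mem_cons_of_mem hi))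
            (fun i hi => hb i (Finset.mem_cons_of_mem hi))
      _ = (Finset.cons a s ha).card * u := by
          rw [Finset.card_cons]; ring

def Sthr (p : ℕ) : ℕ → ℕ
  | 0 => 2
  | (u+1) => (p*(u+1)) * (Sthr p u) + 2

lemma Sthr_ge_two (p u : ℕ) : 2 ≤ Sthr p u := by
  cases u with
  | zero => simp [Sthr]
  | succ n => simp [Sthr]

lemma sunflower_core (p : ℕ) : ∀ (u : ℕ) (Y : Set α) (F : Finset (Set α)),
    (∀ C ∈ F, C.Finite ∧ Y ⊆ C ∧ (C \ Y).ncard ≤ u) → Sthr p u ≤ F.card →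
    ∃ Y' : Set α, Y ⊆ Y' ∧ ∃ G, G ⊆ F ∧ p ≤ G.card ∧ (∀ C ∈ G, Y' ⊆ C) ∧
      (∀ C ∈ G, ∀ C' ∈ G, C ≠ C' → C ∩ C' ⊆ Y') := by
  intro u
  induction u with
  | zero =>
    intro Y F hF hcard
    exfalso
    have hsub : F ⊆ {Y} := by
      intro C hC
      obtain ⟨hfin, hYC, hle⟩ := hF C hC
      have : (C \ Y) = ∅ := (Set.ncard_eq_zero (hfin.diff)).1 (Nat.le_zero.1 hle)
      have hCY : C ⊆ Y := Set.diff_eq_empty.1 this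
      rw [Finset.mem_singleton]
      exact Set.eq_of_subset_of_subset hCY hYC |>.symm ▸ rfl
    have h1 := Finset.card_le_card hsub
    have h2 : ({Y} : Finset (Set α)).card = 1 := Finset.card_singleton Y
    simp only [Sthr] at hcard
    omega
  | succ u IH =>
    intro Y F hF hcard
    classical
    rcases Nat.eq_zero_or_pos p with rfl | hp
    · exact ⟨Y, Subset.rfl, ∅, Finset.empty_subset F, le_refl 0, by simp, by simp⟩
    set F₀ := F.erase Y with hF₀
    have hF₀card : F.card - 1 ≤ F₀.card := by
      simp only [hF₀]
      exact Finset.pred_card_le_card_erase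
    have hF₀mem : ∀ C ∈ F₀, C.Finite ∧ Y ⊆ C ∧ (C \ Y).ncard ≤ u + 1 ∧ (C \ Y).Nonempty := by
      intro C hC
      obtain ⟨hfin, hYC, hle⟩ := hF C (Finset.mem_of_mem_erase hC)
      refine ⟨hfin, hYC, hle, ?_⟩
      rw [Set.nonempty_iff_ne_empty]
      intro hemp
      rw [Set.diff_eq_empty] at hemp
      exact (Finset.ne_of_mem_erase hC) (Set.eq_of_subset_of_subset hemp hYC)
    -- maximal pairwise-petal-disjoint subfamily
    haveI : ∀ (G : Finset (Set α)), Decidable (∀ C ∈ G, ∀ C' ∈ G, C ≠ C' → Disjoint (C \ Y) (C' \ Y)) :=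
      fun _ => Classical.propDecidable _
    set Pfam := F₀.powerset.filter
      (fun G => ∀ C ∈ G, ∀ C' ∈ G, C ≠ C' → Disjoint (C \ Y) (C' \ Y)) with hPfam
    have hPfamne : Pfam.Nonempty := ⟨∅, by simp [hPfam]⟩
    obtain ⟨G₀, hG₀Pfam, hG₀max⟩ := Finset.exists_max_image Pfam Finset.card hPfamne
    have hG₀sub : G₀ ⊆ F₀ := Finset.mem_powerset.1 (Finset.mem_filter.1 hG₀Pfam).1
    have hG₀disj := (Finset.mem_filter.1 hG₀Pfam).2
    by_cases hple : p ≤ G₀.card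
    · refine ⟨Y, Subset.rfl, G₀, hG₀sub.trans (Finset.erase_subset _ _), hple,
        fun C hC => (hF₀mem C (hG₀sub hC)).2.1, ?_⟩
      intro C hC C' hC' hne x hx
      by_contra hxY
      exact Set.disjoint_iff.1 (hG₀disj C hC C' hC' hne) ⟨⟨hx.1, hxY⟩, ⟨hx.2, hxY⟩⟩
    push_neg at hple
    set W : Set α := ⋃ C ∈ G₀, (C \ Y) with hW
    have hWfin : W.Finite :=
      Set.Finite.biUnion G₀.finite_toSet (fun C hC => ((hF₀mem C (hG₀sub hC)).1).diff)
    have hWmeet : ∀ C ∈ F₀, ((C \ Y) ∩ W).Nonempty := by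
      intro C hC
      by_cases hCG : C ∈ G₀
      · obtain ⟨x, hx⟩ := (hF₀mem C hC).2.2.2
        exact ⟨x, hx, Set.mem_biUnion hCG hx⟩
      · by_contra hdisj
        rw [Set.not_nonempty_iff_eq_empty] at hdisj
        have hnew : insert C G₀ ∈ Pfam := by
          rw [hPfam, Finset.mem_filter, Finset.mem_powerset]
          refine ⟨Finset.insert_subset hC hG₀sub, ?_⟩
          intro D hD D' hD' hne
          rcases Finset.mem_insert.1 hD with rfl | hDm
          · rcases Finset.mem_insert.1 hD' with rfl | hD'm
            · exact absurd rfl hne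
            · exact Set.disjoint_left.2 (fun x hx hx' => by
                have hxW : x ∈ (D \ Y) ∩ W := ⟨hx, Set.mem_biUnion hD'm hx'⟩
                rw [hdisj] at hxW; exact hxW)
          · rcases Finset.mem_insert.1 hD' with rfl | hD'm
            · exact (Set.disjoint_left.2 (fun x hx hx' => by
                have hxW : x ∈ (D' \ Y) ∩ W := ⟨hx, Set.mem_biUnion hDm hx'⟩
                rw [hdisj] at hxW; exact hxW)).symm
            · exact hG₀disj D hDm D' hD'm hne
        have := hG₀max _ hnew
        have : ¬ C ∈ G₀ := hCG
        have hcardlt := Finset.card_insert_of_notMem hCG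
        omega
    have hWcard : W.ncard ≤ p * (u+1) := by
      have h1 : W.ncard ≤ G₀.card * (u+1) :=
        ncard_fbiUnion_le G₀ (fun C => C \ Y) (u+1)
          (fun C hC => ((hF₀mem C (hG₀sub hC)).1).diff)
          (fun C hC => (hF₀mem C (hG₀sub hC)).2.2.1)
      have : G₀.card * (u+1) ≤ p * (u+1) := Nat.mul_le_mul_right _ (le_of_lt hple)
      omega
    set Wfin := hWfin.toFinset with hWfin'
    have hWfincard : Wfin.card = W.ncard := (Set.ncard_eq_toFinset_card W hWfin).symm
    -- pigeonhole
    have hpig : ∃ e ∈ Wfin, Sthr p u ≤ (F₀.filter (fun C => e ∈ C \ Y)).card := by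
      by_contra hno
      push_neg at hno
      have hcover : F₀ ⊆ Wfin.biUnion (fun e => F₀.filter (fun C => e ∈ C \ Y)) := by
        intro C hC
        obtain ⟨x, hx1, hx2⟩ := hWmeet C hC
        exact Finset.mem_biUnion.2 ⟨x, hWfin.mem_toFinset.2 hx2, Finset.mem_filter.2 ⟨hC, hx1⟩⟩
      have h1 : F₀.card ≤ Wfin.card * (Sthr p u - 1) := by
        calc F₀.card ≤ (Wfin.biUnion (fun e => F₀.filter (fun C => e ∈ C \ Y))).card :=
              Finset.card_le_card hcover
          _ ≤ ∑ e ∈ Wfin, (F₀.filter (fun C => e ∈ C \ Y)).card := Finset.card_biUnion_le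
          _ ≤ ∑ _e ∈ Wfin, (Sthr p u - 1) := by
              refine Finset.sum_le_sum (fun e he => ?_)
              have := hno e he
              omega
          _ = Wfin.card * (Sthr p u - 1) := by rw [Finset.sum_const, smul_eq_mul]
      have hst := Sthr_ge_two p u
      have hWc : Wfin.card ≤ p * (u+1) := by omega
      have h5 : F.card ≤ p*(u+1) * (Sthr p u - 1) + 1 := by
        have h6 := Nat.mul_le_mul_right (Sthr p u - 1) hWc
        omega
      have hthr : Sthr p (u+1) = (p*(u+1)) * (Sthr p u) + 2 := rfl
      have hpu : 1 ≤ p * (u+1) := Nat.one_le_iff_ne_zero.2 (by positivity)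
      have h3 : p*(u+1) * (Sthr p u - 1) + p*(u+1) = p*(u+1) * (Sthr p u - 1 + 1) := by ring
      have h4 : Sthr p u - 1 + 1 = Sthr p u := by omega
      rw [h4] at h3
      omega
    obtain ⟨e, heW, hefib⟩ := hpig
    have hmem' : ∀ C ∈ F₀.filter (fun C => e ∈ C \ Y),
        C.Finite ∧ insert e Y ⊆ C ∧ (C \ insert e Y).ncard ≤ u := by
      intro C hC
      obtain ⟨hCF₀, heC⟩ := Finset.mem_filter.1 hC
      obtain ⟨hfin, hYC, hle, -⟩ := hF₀mem C hCF₀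
      refine ⟨hfin, Set.insert_subset heC.1 hYC, ?_⟩
      have h1 : C \ insert e Y = (C \ Y) \ {e} := by
        ext x
        simp only [Set.mem_diff, Set.mem_insert_iff, Set.mem_singleton_iff]
        tauto
      rw [h1]
      have h2 : ((C \ Y) \ {e}).ncard = (C \ Y).ncard - 1 :=
        Set.ncard_diff_singleton_of_mem heC
      have h3 : 1 ≤ (C \ Y).ncard := by
        rw [Nat.one_le_iff_ne_zero]
        intro h0
        rw [Set.ncard_eq_zero (hfin.diff)] at h0
        rw [h0] at heC
        exact heC
      omega
    obtain ⟨Y'', hY''sub, G, hGsub, hGcard, hGmem, hGpair⟩ :=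
      IH (insert e Y) (F₀.filter (fun C => e ∈ C \ Y)) hmem' hefib
    refine ⟨Y'', (Set.subset_insert e Y).trans hY''sub, G, ?_, hGcard, hGmem, hGpair⟩
    exact hGsub.trans ((Finset.filter_subset _ _).trans (Finset.erase_subset _ _))

variable {β : Type*} {M : Matroid β}

lemma elim_cascade (hE : M.E.Finite) (S T Y : Set β) (y : β)
    (b : ℕ) (hY : ∀ K, IsCocircuit M K → ¬ K ⊆ Y) :
    ∀ (m : ℕ) (A : Finset (Set β)),
    (∀ C ∈ A, IsCocircuit M C ∧ y ∈ C ∧ C ∩ S ⊆ T ∧ C.ncard ≤ b) →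
    (∀ C ∈ A, ∀ C' ∈ A, C ≠ C' → C ∩ C' ⊆ Y) →
    2*m ≤ A.card →
    ∃ G : Finset (Set β), G.card = m ∧
      (∀ K ∈ G, IsCocircuit M K ∧ K ∩ S ⊆ T \ {y} ∧ K.ncard ≤ 2*b ∧
        (∀ D : Set β, (∀ C ∈ A, D ∩ C ⊆ Y) → K ∩ D ⊆ Y)) ∧
      (∀ K ∈ G, ∀ K' ∈ G, K ≠ K' → K ∩ K' ⊆ Y) := by
  classical
  have hE' : M✶.E.Finite := by rwa [Matroid.dual_ground]
  intro m
  induction m with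
  | zero =>
    intro A _ _ _
    exact ⟨∅, rfl, by simp, by simp⟩
  | succ m IH =>
    intro A hA hApair hAcard
    have h2 : 1 < A.card := by omega
    obtain ⟨a, haA, c, hcA, hac⟩ := Finset.one_lt_card.1 h2
    obtain ⟨haco, hya, haT, hab⟩ := hA a haA
    obtain ⟨hcco, hyc, hcT, hcb⟩ := hA c hcA
    obtain ⟨K, hKcirc, hKsub⟩ := circuit_elimination hE' haco hcco hac ⟨hya, hyc⟩
    have hKco : IsCocircuit M K := hKcirc
    have haE : a ⊆ M.E := by
      have := haco.subset_ground; rwa [Matroid.dual_ground] at this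
    have hcE : c ⊆ M.E := by
      have := hcco.subset_ground; rwa [Matroid.dual_ground] at this
    have hafin : a.Finite := hE.subset haE
    have hcfin : c.Finite := hE.subset hcE
    set A' := (A.erase a).erase c with hA'
    have hcmem : c ∈ A.erase a := Finset.mem_erase.2 ⟨hac.symm, hcA⟩
    have hA'card : A'.card = A.card - 2 := by
      rw [hA', Finset.card_erase_of_mem hcmem, Finset.card_erase_of_mem haA]
      omega
    have hA'sub : A' ⊆ A := (Finset.erase_subset _ _).trans (Finset.erase_subset _ _)
    have hA'ne : ∀ C ∈ A', C ≠ a ∧ C ≠ c := by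
      intro C hC
      rw [hA'] at hC
      exact ⟨Finset.ne_of_mem_erase (Finset.mem_of_mem_erase hC), Finset.ne_of_mem_erase hC⟩
    obtain ⟨G', hG'card, hG'mem, hG'pair⟩ := IH A'
      (fun C hC => hA C (hA'sub hC)) (fun C hC C' hC' => hApair C (hA'sub hC) C' (hA'sub hC'))
      (by omega)
    -- properties of K
    have hKS : K ∩ S ⊆ T \ {y} := by
      intro x hx
      obtain ⟨hxab, hxy⟩ := hKsub hx.1
      refine ⟨?_, hxy⟩
      rcases hxab with hxa | hxc
      · exact haT ⟨hxa, hx.2⟩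
      · exact hcT ⟨hxc, hx.2⟩
    have hKb : K.ncard ≤ 2*b := by
      have h1 : K.ncard ≤ (a ∪ c).ncard :=
        Set.ncard_le_ncard (hKsub.trans diff_subset) (hafin.union hcfin)
      have h2 := Set.ncard_union_le a c
      omega
    have hKD : ∀ D : Set β, (∀ C ∈ A, D ∩ C ⊆ Y) → K ∩ D ⊆ Y := by
      intro D hD x hx
      rcases (hKsub hx.1).1 with hxa | hxc
      · exact hD a haA ⟨hx.2, hxa⟩
      · exact hD c hcA ⟨hx.2, hxc⟩
    -- K is not equal to any member of G'
    have hKG' : ∀ K' ∈ G', K' ∩ K ⊆ Y := by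
      intro K' hK'
      refine (hG'mem K' hK').2.2.2 K (fun C hC => ?_)
      intro x hx
      obtain ⟨hCa, hCc⟩ := hA'ne C hC
      rcases (hKsub hx.1).1 with hxa | hxc
      · exact hApair a haA C (hA'sub hC) (fun h => hCa h.symm) ⟨hxa, hx.2⟩
      · exact hApair c hcA C (hA'sub hC) (fun h => hCc h.symm) ⟨hxc, hx.2⟩
    have hKne : K ∉ G' := by
      intro hmem
      have : K ∩ K ⊆ Y := hKG' K hmem
      rw [Set.inter_self] at this
      exact hY K hKco this
    refine ⟨insert K G', ?_, ?_, ?_⟩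
    · rw [Finset.card_insert_of_notMem hKne, hG'card]
    · intro K' hK'
      rcases Finset.mem_insert.1 hK' with rfl | hK'm
      · exact ⟨hKco, hKS, hKb, hKD⟩
      · obtain ⟨h1, h2, h3, h4⟩ := hG'mem K' hK'm
        exact ⟨h1, h2, h3, fun D hD => h4 D (fun C hC => hD C (hA'sub hC))⟩
    · intro K₁ hK₁ K₂ hK₂ hne
      rcases Finset.mem_insert.1 hK₁ with rfl | hK₁m <;>
        rcases Finset.mem_insert.1 hK₂ with rfl | hK₂m
      · exact absurd rfl hne
      · intro x hx
        exact hKG' K₂ hK₂m ⟨hx.2, hx.1⟩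
      · exact hKG' K₁ hK₁m
      · exact hG'pair K₁ hK₁m K₂ hK₂m hne

def cfun (k : ℕ) : ℕ := 2^k * Nat.factorial k

lemma cfun_succ (k : ℕ) : cfun (k+1) = 2*(k+1)*(cfun k) := by
  simp [cfun, Nat.factorial_succ]; ring

lemma cfun_pos (k : ℕ) : 0 < cfun k :=
  Nat.mul_pos (pow_pos (by norm_num) k) (Nat.factorial_pos k)

lemma stage (hE : M.E.Finite) (S Y : Set β) (hY : ∀ K, IsCocircuit M K → ¬ K ⊆ Y) :
    ∀ (k : ℕ) (T : Set β) (b : ℕ) (A : Finset (Set β)), T.Finite → T.ncard ≤ k →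
    (∀ C ∈ A, IsCocircuit M C ∧ C ∩ S ⊆ T ∧ C.ncard ≤ b) →
    (∀ C ∈ A, ∀ C' ∈ A, C ≠ C' → C ∩ C' ⊆ Y) →
    cfun k ≤ A.card →
    ∃ K, IsCocircuit M K ∧ K ∩ S = ∅ ∧ K.ncard ≤ b * 2^k := by
  intro k
  induction k with
  | zero =>
    intro T b A hTfin hTcard hA hApair hAcard
    have hT : T = ∅ := by
      rw [← Set.ncard_eq_zero hTfin]; omega
    have : 0 < A.card := lt_of_lt_of_le (cfun_pos 0) hAcard
    obtain ⟨C, hC⟩ := Finset.card_pos.1 this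
    obtain ⟨h1, h2, h3⟩ := hA C hC
    refine ⟨C, h1, ?_, by simpa using h3⟩
    rw [hT] at h2
    exact Set.subset_empty_iff.1 h2
  | succ k IH =>
    intro T b A hTfin hTcard hA hApair hAcard
    classical
    by_cases hdone : ∃ C ∈ A, C ∩ S = ∅
    · obtain ⟨C, hCA, hCS⟩ := hdone
      obtain ⟨h1, h2, h3⟩ := hA C hCA
      refine ⟨C, h1, hCS, ?_⟩
      calc C.ncard ≤ b := h3
        _ = b * 1 := (mul_one b).symm
        _ ≤ b * 2^(k+1) := Nat.mul_le_mul_left b (Nat.one_le_two_pow)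
    push_neg at hdone
    set Tf := hTfin.toFinset with hTf
    have hTfcard : Tf.card = T.ncard := (Set.ncard_eq_toFinset_card T hTfin).symm
    have hpig : ∃ y ∈ Tf, 2 * cfun k ≤ (A.filter (fun C => y ∈ C)).card := by
      by_contra hno
      push_neg at hno
      have hcover : A ⊆ Tf.biUnion (fun y => A.filter (fun C => y ∈ C)) := by
        intro C hC
        obtain ⟨x, hx⟩ := hdone C hC
        have hxT : x ∈ T := (hA C hC).2.1 hx
        exact Finset.mem_biUnion.2 ⟨x, hTfin.mem_toFinset.2 hxT,
          Finset.mem_filter.2 ⟨hC, hx.1⟩⟩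
      have h1 : A.card ≤ Tf.card * (2 * cfun k - 1) := by
        calc A.card ≤ (Tf.biUnion (fun y => A.filter (fun C => y ∈ C))).card :=
              Finset.card_le_card hcover
          _ ≤ ∑ y ∈ Tf, (A.filter (fun C => y ∈ C)).card := Finset.card_biUnion_le
          _ ≤ ∑ _y ∈ Tf, (2 * cfun k - 1) := by
              refine Finset.sum_le_sum (fun y hy => ?_)
              have := hno y hy
              omega
          _ = Tf.card * (2 * cfun k - 1) := by rw [Finset.sum_const, smul_eq_mul]
      have hc := cfun_pos k
      have h2 : Tf.card * (2 * cfun k - 1) ≤ (k+1) * (2 * cfun k - 1) := by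
        apply Nat.mul_le_mul_right
        omega
      have h3 := cfun_succ k
      have h4 : (k+1) * (2 * cfun k - 1) + (k+1) = (k+1) * (2 * cfun k - 1 + 1) := by ring
      have h5 : 2 * cfun k - 1 + 1 = 2 * cfun k := by omega
      rw [h5] at h4
      have h6 : (k+1) * (2 * cfun k) = cfun (k+1) := by rw [h3]; ring
      omega
    obtain ⟨y, hyTf, hyfib⟩ := hpig
    have hyT : y ∈ T := hTfin.mem_toFinset.1 hyTf
    set Ay := A.filter (fun C => y ∈ C) with hAy
    have hAysub : Ay ⊆ A := Finset.filter_subset _ _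
    obtain ⟨G, hGcard, hGmem, hGpair⟩ := elim_cascade hE S T Y y b hY (cfun k) Ay
      (fun C hC => by
        obtain ⟨h1, h2, h3⟩ := hA C (hAysub hC)
        exact ⟨h1, (Finset.mem_filter.1 hC).2, h2, h3⟩)
      (fun C hC C' hC' => hApair C (hAysub hC) C' (hAysub hC'))
      hyfib
    obtain ⟨K, hK1, hK2, hK3⟩ := IH (T \ {y}) (2*b) G (hTfin.diff)
      (by
        have := Set.ncard_diff_singleton_of_mem hyT
        omega)
      (fun C hC => ⟨(hGmem C hC).1, (hGmem C hC).2.1, (hGmem C hC).2.2.1⟩)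
      hGpair
      (le_of_eq hGcard.symm)
    refine ⟨K, hK1, hK2, ?_⟩
    calc K.ncard ≤ 2*b * 2^k := hK3
      _ = b * 2^(k+1) := by ring

lemma exists_cocircuit_family (hE : M.E.Finite) {t : ℕ} (ht : 0 < t)
    (hsupply : ∀ X ⊆ M.E, X.ncard = t → ∃ K, IsCocircuit M K ∧ K.ncard = 2*t ∧ X ⊆ K) :
    ∀ n : ℕ, n * (2*t) + t ≤ M.E.ncard →
    ∃ F : Finset (Set β), F.card = n ∧ ∀ C ∈ F, IsCocircuit M C ∧ C.ncard = 2*t := by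
  classical
  intro n
  induction n with
  | zero => exact fun _ => ⟨∅, rfl, by simp⟩
  | succ n IH =>
    intro hbig
    have hstep : n*(2*t) ≤ (n+1)*(2*t) := Nat.mul_le_mul_right _ (by omega)
    obtain ⟨F, hFcard, hFmem⟩ := IH (by omega)
    have hUfin : (⋃ C ∈ F, C).Finite := by
      refine Set.Finite.biUnion F.finite_toSet (fun C hC => ?_)
      have := (hFmem C hC).1.subset_ground
      rw [Matroid.dual_ground] at this
      exact hE.subset this
    have hUcard : (⋃ C ∈ F, C).ncard ≤ n * (2*t) := by
      have h7 := ncard_fbiUnion_le F (fun C => C) (2*t)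
        (fun C hC => by
          have := (hFmem C hC).1.subset_ground
          rw [Matroid.dual_ground] at this
          exact hE.subset this)
        (fun C hC => le_of_eq (hFmem C hC).2)
      have h8 : (⋃ C ∈ F, C).ncard ≤ F.card * (2*t) := h7
      rw [hFcard] at h8
      exact h8
    have hdiff : t ≤ (M.E \ ⋃ C ∈ F, C).ncard := by
      have h1 : (M.E \ ⋃ C ∈ F, C).ncard + (⋃ C ∈ F, C).ncard ≥ M.E.ncard := by
        have h2 : M.E ⊆ (M.E \ ⋃ C ∈ F, C) ∪ (⋃ C ∈ F, C) := by
          intro x hx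
          by_cases hxU : x ∈ ⋃ C ∈ F, C
          · exact Or.inr hxU
          · exact Or.inl ⟨hx, hxU⟩
        calc M.E.ncard ≤ ((M.E \ ⋃ C ∈ F, C) ∪ (⋃ C ∈ F, C)).ncard :=
              Set.ncard_le_ncard h2 ((hE.diff).union hUfin)
          _ ≤ _ := Set.ncard_union_le _ _
      omega
    obtain ⟨X, hXsub, hXcard⟩ := Set.exists_subset_card_eq hdiff
    obtain ⟨K, hKco, hKcard, hXK⟩ := hsupply X (hXsub.trans diff_subset) hXcard
    have hKnew : K ∉ F := by
      intro hKF
      obtain ⟨x, hxX⟩ : X.Nonempty := by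
        rw [← Set.ncard_pos (hE.subset (hXsub.trans diff_subset))]
        omega
      exact (hXsub hxX).2 (Set.mem_biUnion hKF (hXK hxX))
    refine ⟨insert K F, ?_, ?_⟩
    · rw [Finset.card_insert_of_notMem hKnew, hFcard]
    · intro C hC
      rcases Finset.mem_insert.1 hC with rfl | hCF
      · exact ⟨hKco, hKcard⟩
      · exact hFmem C hCF

def engN (t s : ℕ) : ℕ := Sthr (cfun (2*t) + s + 2) (2*t) * (2*t) + t

lemma exists_cocircuit_avoiding (hE : M.E.Finite) {t : ℕ} (ht : 0 < t)
    (hsupply : ∀ X ⊆ M.E, X.ncard = t → ∃ K, IsCocircuit M K ∧ K.ncard = 2*t ∧ X ⊆ K)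
    (S : Set β) (hSfin : S.Finite) {s : ℕ} (hS : S.ncard ≤ s)
    (hbig : engN t s ≤ M.E.ncard) :
    ∃ K, IsCocircuit M K ∧ Disjoint K S ∧ K.ncard ≤ 2*t*2^(2*t) := by
  classical
  have hEne : M.E.Nonempty := by
    rw [← Set.ncard_pos hE]
    have : 0 < engN t s := by
      have := cfun_pos (2*t)
      have := Sthr_ge_two (cfun (2*t) + s + 2) (2*t)
      rw [engN]
      omega
    omega
  obtain ⟨x₀, -⟩ := hEne
  set p := cfun (2*t) + s + 2 with hp
  obtain ⟨F, hFcard, hFmem⟩ := exists_cocircuit_family hE ht hsupply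
    (Sthr p (2*t)) (by rw [engN] at hbig; rw [← hp] at hbig; omega)
  by_cases hdone : ∃ C ∈ F, C ∩ S = ∅
  · obtain ⟨C, hCF, hCS⟩ := hdone
    refine ⟨C, (hFmem C hCF).1, Set.disjoint_iff_inter_eq_empty.2 hCS, ?_⟩
    rw [(hFmem C hCF).2]
    calc 2*t = 2*t*1 := (mul_one _).symm
      _ ≤ 2*t*2^(2*t) := Nat.mul_le_mul_left _ (Nat.one_le_two_pow)
  push_neg at hdone
  have hFfin : ∀ C ∈ F, C.Finite := by
    intro C hC
    have := (hFmem C hC).1.subset_ground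
    rw [Matroid.dual_ground] at this
    exact hE.subset this
  obtain ⟨Y, -, G, hGF, hGcard, hGY, hGpair⟩ := sunflower_core p (2*t) ∅ F
    (fun C hC => ⟨hFfin C hC, Set.empty_subset C, by
      rw [Set.diff_empty]; exact le_of_eq (hFmem C hC).2⟩)
    (le_of_eq hFcard.symm)
  have hp2 : 1 < G.card := by
    have := cfun_pos (2*t)
    omega
  obtain ⟨C₁, hC₁G, C₂, hC₂G, hC₁₂⟩ := Finset.one_lt_card.1 hp2
  have hY : ∀ K, IsCocircuit M K → ¬ K ⊆ Y := by
    intro K hK hKY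
    have h1 : K = C₁ := hK.eq_of_subset (hFmem C₁ (hGF hC₁G)).1 (hKY.trans (hGY C₁ hC₁G))
    have h2 : K = C₂ := hK.eq_of_subset (hFmem C₂ (hGF hC₂G)).1 (hKY.trans (hGY C₂ hC₂G))
    exact hC₁₂ (h1 ▸ h2)
  -- drop members whose trace is not inside Y
  set B := G.filter (fun C => C ∩ S ⊆ Y) with hB
  have hBsub : B ⊆ G := Finset.filter_subset _ _
  have hBcard : G.card - s ≤ B.card := by
    have hinj : ∀ C : Set β, ∃ x, C ∈ G \ B → (x ∈ C ∩ S ∧ x ∉ Y) := by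
      intro C
      by_cases hC : C ∈ G \ B
      · obtain ⟨hCG, hCB⟩ := Finset.mem_sdiff.1 hC
        have h1 : ¬ (C ∩ S ⊆ Y) := fun h => hCB (Finset.mem_filter.2 ⟨hCG, h⟩)
        rw [Set.not_subset] at h1
        obtain ⟨x, hx1, hx2⟩ := h1
        exact ⟨x, fun _ => ⟨hx1, hx2⟩⟩
      · exact ⟨x₀, fun h => absurd h hC⟩
    choose φ hφ using hinj
    have hcard2 : (G \ B).card ≤ hSfin.toFinset.card := by
      refine Finset.card_le_card_of_injOn φ ?_ ?_
      · intro C hC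
        exact hSfin.mem_toFinset.2 ((hφ C hC).1).2
      · intro C hC C' hC' heq
        by_contra hne
        have h1 := hφ C hC
        have h2 := hφ C' hC'
        have hxY : φ C ∈ C ∩ C' := ⟨h1.1.1, heq ▸ h2.1.1⟩
        exact h1.2 (hGpair C (Finset.mem_sdiff.1 hC).1 C' (Finset.mem_sdiff.1 hC').1 hne hxY)
    have h3 : (G \ B).card = G.card - B.card := Finset.card_sdiff_of_subset hBsub
    have h4 : hSfin.toFinset.card = S.ncard := (Set.ncard_eq_toFinset_card S hSfin).symm
    have h5 : B.card ≤ G.card := Finset.card_le_card hBsub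
    omega
  set T := Y ∩ S with hT
  have hTfin : T.Finite := hSfin.subset inter_subset_right
  have hC₁fin : C₁.Finite := hFfin C₁ (hGF hC₁G)
  have hTcard : T.ncard ≤ 2*t := by
    have h1 : T ⊆ C₁ := (inter_subset_left).trans (hGY C₁ hC₁G)
    have h2 := Set.ncard_le_ncard h1 hC₁fin
    rw [(hFmem C₁ (hGF hC₁G)).2] at h2
    exact h2
  obtain ⟨K, hK1, hK2, hK3⟩ := stage hE S Y hY (2*t) T (2*t) B hTfin hTcard
    (fun C hC => by
      have hCG := hBsub hC
      refine ⟨(hFmem C (hGF hCG)).1, ?_, le_of_eq (hFmem C (hGF hCG)).2⟩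
      intro x hx
      exact ⟨(Finset.mem_filter.1 hC).2 hx, hx.2⟩)
    (fun C hC C' hC' => hGpair C (hBsub hC) C' (hBsub hC'))
    (by
      have := Finset.card_le_card hGF
      omega)
  exact ⟨K, hK1, Set.disjoint_iff_inter_eq_empty.2 hK2, hK3⟩

lemma iUnion_fin_succ {n : ℕ} (f : Fin (n+1) → Set β) :
    (⋃ i, f i) = f 0 ∪ ⋃ i : Fin n, f i.succ := by
  ext x
  simp only [Set.mem_iUnion, Set.mem_union]
  constructor
  · rintro ⟨i, hx⟩
    rcases Fin.eq_zero_or_eq_succ i with rfl | ⟨j, rfl⟩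
    · exact Or.inl hx
    · exact Or.inr ⟨j, hx⟩
  · rintro (hx | ⟨i, hx⟩)
    · exact ⟨0, hx⟩
    · exact ⟨i.succ, hx⟩

lemma ncard_iUnion_fin_eq : ∀ (n : ℕ) (f : Fin n → Set β), (∀ i, (f i).Finite) →
    (∀ i j, i ≠ j → Disjoint (f i) (f j)) →
    (⋃ i, f i).ncard = ∑ i, (f i).ncard := by
  intro n
  induction n with
  | zero =>
    intro f _ _
    simp
  | succ n IH =>
    intro f hfin hdisj
    rw [iUnion_fin_succ f]
    have hd : Disjoint (f 0) (⋃ i : Fin n, f i.succ) := by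
      rw [Set.disjoint_iUnion_right]
      exact fun i => hdisj 0 i.succ (Fin.succ_ne_zero i).symm
    have hfin2 : (⋃ i : Fin n, f i.succ).Finite :=
      Set.finite_iUnion (fun i => hfin i.succ)
    rw [Set.ncard_union_eq hd (hfin 0) hfin2]
    rw [IH (fun i => f i.succ) (fun i => hfin i.succ)
      (fun i j hij => hdisj i.succ j.succ (fun h => hij (Fin.succ_injective n h)))]
    rw [Fin.sum_univ_succ]

lemma ncard_iUnion_fin_le (n : ℕ) (f : Fin n → Set β) (u : ℕ) (hfin : ∀ i, (f i).Finite)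
    (hb : ∀ i, (f i).ncard ≤ u) : (⋃ i, f i).ncard ≤ n * u := by
  classical
  have h1 : (⋃ i, f i) = ⋃ i ∈ (Finset.univ : Finset (Fin n)), f i := by
    simp
  rw [h1]
  have := ncard_fbiUnion_le (Finset.univ : Finset (Fin n)) f u
    (fun i _ => hfin i) (fun i _ => hb i)
  simpa using this

lemma exists_disjoint_cocircuits (hE : M.E.Finite) {t : ℕ} (ht : 0 < t)
    (hsupply : ∀ X ⊆ M.E, X.ncard = t → ∃ K, IsCocircuit M K ∧ K.ncard = 2*t ∧ X ⊆ K)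
    (hbig : engN t ((t-1)*(2*t*2^(2*t))) ≤ M.E.ncard) :
    ∀ n : ℕ, n ≤ t - 1 → ∃ f : Fin n → Set β,
      (∀ i, IsCocircuit M (f i) ∧ (f i).ncard ≤ 2*t*2^(2*t)) ∧
      (∀ i j, i ≠ j → Disjoint (f i) (f j)) := by
  intro n
  induction n with
  | zero =>
    exact fun _ => ⟨fun i => i.elim0, fun i => i.elim0, fun i => i.elim0⟩
  | succ n IH =>
    intro hn
    obtain ⟨f', hf'mem, hf'disj⟩ := IH (by omega)
    set S := ⋃ i, f' i with hS
    have hSE : S ⊆ M.E := by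
      rw [hS]
      refine Set.iUnion_subset (fun i => ?_)
      have := (hf'mem i).1.subset_ground
      rwa [Matroid.dual_ground] at this
    have hSfin : S.Finite := hE.subset hSE
    have hScard : S.ncard ≤ (t-1)*(2*t*2^(2*t)) := by
      have h1 := ncard_iUnion_fin_le n f' (2*t*2^(2*t))
        (fun i => hE.subset (by
          have := (hf'mem i).1.subset_ground
          rwa [Matroid.dual_ground] at this))
        (fun i => (hf'mem i).2)
      have h2 : n * (2*t*2^(2*t)) ≤ (t-1) * (2*t*2^(2*t)) :=
        Nat.mul_le_mul_right _ (by omega)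
      rw [hS]
      omega
    obtain ⟨K, hKco, hKdisj, hKcard⟩ := exists_cocircuit_avoiding hE ht hsupply S hSfin
      hScard hbig
    refine ⟨Fin.cons K f', fun i => ?_, fun i j hij => ?_⟩
    · rcases Fin.eq_zero_or_eq_succ i with rfl | ⟨k, rfl⟩
      · simpa using ⟨hKco, hKcard⟩
      · simpa using hf'mem k
    · rcases Fin.eq_zero_or_eq_succ i with rfl | ⟨k, rfl⟩ <;>
        rcases Fin.eq_zero_or_eq_succ j with rfl | ⟨l, rfl⟩
      · exact absurd rfl hij
      · simp only [Fin.cons_zero, Fin.cons_succ]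
        exact hKdisj.mono_right (Set.subset_iUnion f' l)
      · simp only [Fin.cons_zero, Fin.cons_succ]
        exact (hKdisj.mono_right (Set.subset_iUnion f' k)).symm
      · simp only [Fin.cons_succ]
        exact hf'disj k l (fun h => hij (by rw [h]))

lemma le_rk_of_indep (hE : M.E.Finite) {Z I : Set β} (hIZ : I ⊆ Z) (hI : M.Indep I) :
    I.ncard ≤ rk M Z := by
  apply le_csSup
  · refine ⟨M.E.ncard, ?_⟩
    rintro m ⟨J, _, hJ, rfl⟩
    exact Set.ncard_le_ncard hJ.subset_ground hE
  · exact ⟨I, hIZ, hI, rfl⟩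

lemma HasTLProperty.dual {t l : ℕ} (h : HasTLProperty M t l) : HasTLProperty M✶ t l := by
  intro X hX hcard
  rw [Matroid.dual_ground] at hX
  obtain ⟨⟨Cc, hCc, h1, h2⟩, ⟨Ck, hCk, h3, h4⟩⟩ := h X hX hcard
  refine ⟨⟨Ck, hCk, h3, h4⟩, ⟨Cc, ?_, h1, h2⟩⟩
  show IsCircuit M✶✶ Cc
  rwa [Matroid.dual_dual]

universe u

theorem statement12 :
    ∃ g : ℕ × ℕ → ℕ, ∀ t q : ℕ, 0 < t → 0 < q →
      ∀ {α : Type u} (M : Matroid α), M.E.Finite → HasTLProperty M t (2 * t) →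
        g (t, q) ≤ M.E.ncard →
        ∃ M' : Matroid α, (M' = M ∨ M' = M✶) ∧
          ∃ C : Fin (t - 1) → Set α, (∀ i, IsCocircuit M' (C i)) ∧
            (∀ i j, i ≠ j → Disjoint (C i) (C j)) ∧
            ∃ Z ⊆ M'.E \ ⋃ i, C i, q ≤ rk M' Z ∧
              ∀ z ∈ Z, ∃ z' ∈ Z \ {z}, ∃ x x' : Fin (t - 1) → α,
                (∀ i, x i ∈ C i ∧ x' i ∈ C i ∧ x i ≠ x' i) ∧
                IsCircuit M' ({z, z'} ∪ ⋃ i, {x i, x' i}) := by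
  refine ⟨fun p => engN p.1 ((p.1-1)*(2*p.1*2^(2*p.1)))
    + 2*(p.2 + (p.1-1)*(2*p.1*2^(2*p.1))) + p.1 + 1, ?_⟩
  intro t q ht hq α M hE hTL hbig
  simp only at hbig
  set sb := (t-1)*(2*t*2^(2*t)) with hsb
  set N := M.E.ncard with hN
  -- Choose M' with a large base
  obtain ⟨B₀, hB₀⟩ := M.exists_isBase
  have hB₀E := hB₀.subset_ground
  have hB₀fin : B₀.Finite := hE.subset hB₀E
  have hsplit : B₀.ncard + (M.E \ B₀).ncard = N := by
    rw [← Set.ncard_union_eq disjoint_sdiff_right hB₀fin (hE.diff), Set.union_diff_cancel hB₀E]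
  obtain ⟨M', hM'or, hM'E, hM'prop, B, hB, hBN⟩ :
      ∃ M' : Matroid α, (M' = M ∨ M' = M✶) ∧ M'.E = M.E ∧ HasTLProperty M' t (2*t) ∧
        ∃ B, M'.IsBase B ∧ N ≤ 2*B.ncard := by
    by_cases hc : N ≤ 2 * B₀.ncard
    · exact ⟨M, Or.inl rfl, rfl, hTL, B₀, hB₀, hc⟩
    · refine ⟨M✶, Or.inr rfl, Matroid.dual_ground, hTL.dual, M.E \ B₀,
        hB₀.compl_isBase_dual, by omega⟩
  have hE' : M'.E.Finite := hM'E ▸ hE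
  have hN' : M'.E.ncard = N := by rw [hM'E]
  have hsupply : ∀ X ⊆ M'.E, X.ncard = t → ∃ K, IsCocircuit M' K ∧ K.ncard = 2*t ∧ X ⊆ K :=
    fun X hX hc => (hM'prop X hX hc).2
  have hbig' : engN t sb ≤ M'.E.ncard := by rw [hN']; omega
  obtain ⟨C, hCmem, hCdisj⟩ := exists_disjoint_cocircuits hE' ht hsupply hbig' (t-1) le_rfl
  have hCco : ∀ i, IsCocircuit M' (C i) := fun i => (hCmem i).1
  have hCE : ∀ i, C i ⊆ M'.E := by
    intro i
    have := (hCco i).subset_ground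
    rwa [Matroid.dual_ground] at this
  set U := ⋃ i, C i with hU
  have hUE : U ⊆ M'.E := Set.iUnion_subset hCE
  have hUfin : U.Finite := hE'.subset hUE
  have hUcard : U.ncard ≤ sb := by
    have := ncard_iUnion_fin_le (t-1) C (2*t*2^(2*t))
      (fun i => hE'.subset (hCE i)) (fun i => (hCmem i).2)
    rw [hsb]
    exact this
  set Z := M'.E \ M'.closure U with hZdef
  have hUcl : U ⊆ M'.closure U := M'.subset_closure U hUE
  have hZsub : Z ⊆ M'.E \ U := diff_subset_diff_right hUcl
  -- rank of Z is at least q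
  obtain ⟨IU, hIU⟩ := M'.exists_isBasis U hUE
  have hIUcard : IU.ncard ≤ sb := (Set.ncard_le_ncard hIU.subset hUfin).trans hUcard
  obtain ⟨B₁, hB₁, hIUB₁⟩ := hIU.indep.exists_isBase_superset
  have hB₁card : B₁.ncard = B.ncard := hB₁.ncard_eq_ncard_of_isBase hB
  have hB₁fin : B₁.Finite := hE'.subset hB₁.subset_ground
  have hdiffsub : B₁ \ IU ⊆ Z := by
    intro b hb
    refine ⟨hB₁.subset_ground hb.1, ?_⟩
    intro hbcl
    rw [← hIU.closure_eq_closure] at hbcl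
    exact (hB₁.indep.notMem_closure_sdiff_of_mem hb.1)
      (M'.closure_subset_closure (Set.subset_diff_singleton hIUB₁ hb.2) hbcl)
  have hdiffcard : q ≤ (B₁ \ IU).ncard := by
    rw [Set.ncard_diff hIUB₁ (hB₁fin.subset hIUB₁)]
    omega
  obtain ⟨I, hIsub, hIcard⟩ := Set.exists_subset_card_eq hdiffcard
  have hrk : q ≤ rk M' Z := by
    rw [← hIcard]
    exact le_rk_of_indep hE' (hIsub.trans hdiffsub)
      (hB₁.indep.subset (hIsub.trans diff_subset))
  refine ⟨M', hM'or, C, hCco, hCdisj, Z, hZsub, hrk, ?_⟩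
  -- the partner property
  intro z hz
  have hzE : z ∈ M'.E := hz.1
  have hzcl : z ∉ M'.closure U := hz.2
  have hzU : z ∉ U := fun h => hzcl (hUcl h)
  have hCne : ∀ i, (C i).Nonempty := fun i => (hCco i).nonempty
  choose x hx using hCne
  have hxU : ∀ i, x i ∈ U := fun i => Set.mem_iUnion.2 ⟨i, hx i⟩
  have hxinj : Function.Injective x := by
    intro i j hij
    by_contra hne
    exact Set.disjoint_left.1 (hCdisj i j hne) (hx i) (hij ▸ hx j)
  have hzrange : z ∉ Set.range x := by
    rintro ⟨i, rfl⟩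
    exact hzU (hxU i)
  set X₀ := insert z (Set.range x) with hX₀
  have hX₀E : X₀ ⊆ M'.E := by
    refine Set.insert_subset hzE ?_
    rintro _ ⟨i, rfl⟩
    exact hUE (hxU i)
  have hrangecard : (Set.range x).ncard = t - 1 := by
    rw [← Set.image_univ, Set.ncard_image_of_injective _ hxinj, Set.ncard_univ]
    simp
  have hX₀card : X₀.ncard = t := by
    rw [hX₀, Set.ncard_insert_of_notMem hzrange (Set.finite_range x), hrangecard]
    omega
  obtain ⟨D, hD, hDcard, hX₀D⟩ := (hM'prop X₀ hX₀E hX₀card).1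
  have hDE : D ⊆ M'.E := hD.subset_ground
  have hDfin : D.Finite := hE'.subset hDE
  have hzD : z ∈ D := hX₀D (Or.inl rfl)
  have hDCfin : ∀ i, (D ∩ C i).Finite := fun i => hDfin.subset inter_subset_left
  have hxiD : ∀ i, x i ∈ D ∩ C i := fun i => ⟨hX₀D (Or.inr ⟨i, rfl⟩), hx i⟩
  have h2le : ∀ i, 2 ≤ (D ∩ C i).ncard := by
    intro i
    have hpos : 0 < (D ∩ C i).ncard := (Set.ncard_pos (hDCfin i)).2 ⟨_, hxiD i⟩
    by_contra hlt
    have h1 : (D ∩ C i).ncard = 1 := by omega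
    obtain ⟨a, ha⟩ := Set.ncard_eq_one.1 h1
    exact circuit_cocircuit_inter_ne_singleton hD (hCco i) ha
  have hDU : D ∩ U = ⋃ i, D ∩ C i := by rw [hU, Set.inter_iUnion]
  have hsum : (D ∩ U).ncard = ∑ i, (D ∩ C i).ncard := by
    rw [hDU]
    exact ncard_iUnion_fin_eq _ _ hDCfin
      (fun i j hij => (hCdisj i j hij).mono inter_subset_right inter_subset_right)
  have hsum_ge : 2*(t-1) ≤ ∑ i, (D ∩ C i).ncard := by
    have h1 := Finset.card_nsmul_le_sum Finset.univ (fun i => (D ∩ C i).ncard) 2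
      (fun i _ => h2le i)
    simp only [Finset.card_univ, Fintype.card_fin, smul_eq_mul] at h1
    omega
  have htotal : (D ∩ U).ncard + (D \ U).ncard = 2*t := by
    have hdisj : Disjoint (D ∩ U) (D \ U) :=
      Set.disjoint_left.2 (fun a h1 h2 => h2.2 h1.2)
    rw [← Set.ncard_union_eq hdisj (hDfin.subset inter_subset_left) (hDfin.diff),
      Set.inter_union_diff]
    exact hDcard
  have hzDU : z ∈ D \ U := ⟨hzD, hzU⟩
  have hDUfin : (D \ U).Finite := hDfin.diff
  have hDUpos : 0 < (D \ U).ncard := (Set.ncard_pos hDUfin).2 ⟨z, hzDU⟩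
  have hDUne1 : (D \ U).ncard ≠ 1 := by
    intro h1
    obtain ⟨a, ha⟩ := Set.ncard_eq_one.1 h1
    have hsub2 : D \ {z} ⊆ M'.closure U := by
      intro d hd
      by_cases hdU : d ∈ U
      · exact hUcl hdU
      · exfalso
        have hdDU : d ∈ D \ U := ⟨hd.1, hdU⟩
        rw [ha] at hdDU hzDU
        exact hd.2 (by rw [mem_singleton_iff.1 hdDU, ← mem_singleton_iff.1 hzDU]; rfl)
    exact hzcl (Matroid.closure_subset_closure_of_subset_closure hsub2
      (hD.mem_closure_diff_singleton hzD))
  have hDU2 : (D \ U).ncard = 2 := by omega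
  obtain ⟨a, b, hab, habeq⟩ := Set.ncard_eq_two.1 hDU2
  obtain ⟨z', hz'ne, hzz'⟩ : ∃ z', z' ≠ z ∧ D \ U = {z, z'} := by
    have hzab : z ∈ ({a, b} : Set α) := habeq ▸ hzDU
    rcases hzab with rfl | hzb
    · exact ⟨b, fun h => hab h.symm, habeq⟩
    · have hzb' : z = b := mem_singleton_iff.1 hzb
      subst hzb'
      exact ⟨a, fun h => hab h, habeq.trans (Set.pair_comm a z)⟩
  have hz'DU : z' ∈ D \ U := by rw [hzz']; exact Or.inr rfl
  have hsum_eq : ∑ i, (D ∩ C i).ncard = 2*(t-1) := by omega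
  have hterm2 : ∀ i, (D ∩ C i).ncard = 2 := by
    intro i
    by_contra hne
    have h3 : 3 ≤ (D ∩ C i).ncard := by
      have := h2le i
      omega
    have hrest : ((Finset.univ.erase i).card) • 2 ≤
        ∑ j ∈ Finset.univ.erase i, (D ∩ C j).ncard :=
      Finset.card_nsmul_le_sum (Finset.univ.erase i)
        (fun j => (D ∩ C j).ncard) 2 (fun j _ => h2le j)
    have hsplit : (D ∩ C i).ncard + ∑ j ∈ Finset.univ.erase i, (D ∩ C j).ncard =
        ∑ j, (D ∩ C j).ncard :=
      Finset.add_sum_erase Finset.univ (fun j => (D ∩ C j).ncard) (Finset.mem_univ i)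
    have hcarderase : (Finset.univ.erase i).card = t - 1 - 1 := by
      rw [Finset.card_erase_of_mem (Finset.mem_univ i), Finset.card_univ, Fintype.card_fin]
    have ht2 : 1 ≤ t - 1 := by
      have := i.isLt
      omega
    rw [hcarderase] at hrest
    simp only [smul_eq_mul] at hrest
    omega
  have hpair2 : ∀ i, ∃ w, w ≠ x i ∧ w ∈ C i ∧ D ∩ C i = {x i, w} := by
    intro i
    obtain ⟨a', b', hab', heq'⟩ := Set.ncard_eq_two.1 (hterm2 i)
    have hxi := hxiD i
    rw [heq'] at hxi
    rcases hxi with hxa | hxb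
    · refine ⟨b', ?_, ?_, ?_⟩
      · rw [← hxa] at hab'
        exact fun h => hab' h.symm
      · have hmem : b' ∈ D ∩ C i := by rw [heq']; exact Or.inr rfl
        exact hmem.2
      · rw [heq', ← hxa]
    · have hxb' : x i = b' := mem_singleton_iff.1 hxb
      refine ⟨a', ?_, ?_, ?_⟩
      · rw [← hxb'] at hab'
        exact hab'
      · have hmem : a' ∈ D ∩ C i := by rw [heq']; exact Or.inl rfl
        exact hmem.2
      · rw [heq', ← hxb']
        exact Set.pair_comm a' (x i)
  choose x' hx'ne hx'C hx'eq using hpair2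
  have hDeq : ({z, z'} ∪ ⋃ i, {x i, x' i}) = D := by
    apply Set.eq_of_subset_of_subset
    · refine Set.union_subset ?_ ?_
      · rintro d (rfl | hd)
        · exact hzD
        · rw [mem_singleton_iff.1 hd]
          exact hz'DU.1
      · refine Set.iUnion_subset (fun i => ?_)
        rw [← hx'eq i]
        exact inter_subset_left
    · intro d hd
      by_cases hdU : d ∈ U
      · refine Or.inr ?_
        have : d ∈ D ∩ U := ⟨hd, hdU⟩
        rw [hDU] at this
        obtain ⟨i, hi⟩ := Set.mem_iUnion.1 this
        refine Set.mem_iUnion.2 ⟨i, ?_⟩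
        rw [← hx'eq i]
        exact hi
      · refine Or.inl ?_
        have : d ∈ D \ U := ⟨hd, hdU⟩
        rw [hzz'] at this
        exact this
  have hz'Z : z' ∈ Z := by
    refine ⟨hDE hz'DU.1, ?_⟩
    intro hz'cl
    have hsub2 : D \ {z} ⊆ M'.closure U := by
      intro d hd
      by_cases hdU : d ∈ U
      · exact hUcl hdU
      · have hdDU : d ∈ D \ U := ⟨hd.1, hdU⟩
        rw [hzz'] at hdDU
        rcases hdDU with rfl | hdz'
        · exact absurd rfl hd.2
        · rw [mem_singleton_iff.1 hdz']
          exact hz'cl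
    exact hzcl (Matroid.closure_subset_closure_of_subset_closure hsub2
      (hD.mem_closure_diff_singleton hzD))
  refine ⟨z', ⟨hz'Z, hz'ne⟩, x, x',
    fun i => ⟨hx i, hx'C i, fun h => (hx'ne i) h.symm⟩, ?_⟩
  rw [hDeq]
  exact hD
end

section
/- Let M be a t-spike of order r. Then r ≥ 2t − 1. -/
open Set

/-- `A` is an associated partition witnessing that `M` is a `t`-spike of order `r`:
a partition of the ground set into `r` two-element arms (with `r ≥ t`) such that the
union of any `t` arms is both a circuit and a cocircuit. -/
def IsSpike {α : Type*} (M : Matroid α) (t r : ℕ) (A : Fin r → Set α) : Prop :=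
  t ≤ r ∧ (∀ i, (A i).ncard = 2) ∧ (∀ i j, i ≠ j → Disjoint (A i) (A j)) ∧
    (⋃ i, A i) = M.E ∧
    ∀ I : Finset (Fin r), I.card = t →
      IsCircuit M (⋃ i ∈ I, A i) ∧ IsCocircuit M (⋃ i ∈ I, A i)

/-- The connectivity function `λ(X) = r(X) + r(E \ X) − r(M)`. -/
noncomputable def lambda {α : Type*} (M : Matroid α) (X : Set α) : ℤ :=
  (rk M X : ℤ) + (rk M (M.E \ X) : ℤ) - (rk M M.E : ℤ)

private lemma encard_biUnion_aux {α ι : Type*} [DecidableEq ι] {A : ι → Set α} (K : Finset ι)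
    (h : ∀ i j, i ≠ j → Disjoint (A i) (A j)) :
    (⋃ i ∈ K, A i).encard = ∑ i ∈ K, (A i).encard := by
  induction K using Finset.induction_on with
  | empty => simp
  | @insert a K ha ih =>
    rw [Finset.set_biUnion_insert, Set.encard_union_eq, Finset.sum_insert ha, ih]
    simp only [Set.disjoint_iUnion_right]
    intro i hi
    exact h a i (by rintro rfl; exact ha hi)

theorem statement14 {α : Type*} (M : Matroid α) (t r : ℕ) (ht : 0 < t)
    (A : Fin r → Set α) (hA : IsSpike M t r A) :
    2 * t - 1 ≤ r := by
  by_contra hcon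
  push_neg at hcon
  obtain ⟨htr, hcard, hdisj, hE, hCC⟩ := hA
  -- basic facts
  have ht2 : 2 ≤ t := by omega
  have hr2 : r ≤ 2 * t - 2 := by omega
  have harm : ∀ i, (A i).encard = 2 := by
    intro i
    obtain ⟨a, b, hab, hab'⟩ := Set.ncard_eq_two.mp (hcard i)
    rw [hab']; exact Set.encard_pair hab
  have harmne : ∀ i, (A i).Nonempty := by
    intro i
    rw [← Set.encard_ne_zero, harm i]; simp
  have hfr : Fintype.card (Fin r) = r := Fintype.card_fin r
  -- choose J with card t
  obtain ⟨J, -, hJ⟩ := Finset.exists_subset_card_eq (s := (Finset.univ : Finset (Fin r))) (n := t)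
    (by simpa [hfr] using htr)
  set D : Set α := ⋃ i ∈ J, A i with hD
  obtain ⟨hDcirc, hDcocirc⟩ := hCC J hJ
  have hDE : D ⊆ M.E := hDcirc.1.subset_ground
  -- complement of D is the union of the other arms
  have hcompl : M.E \ D = ⋃ i ∈ Jᶜ, A i := by
    ext x
    simp only [Set.mem_diff, ← hE, Set.mem_iUnion, Finset.mem_compl]
    constructor
    · rintro ⟨⟨i, hxi⟩, hxD⟩
      refine ⟨i, fun hiJ => hxD ?_, hxi⟩
      exact Set.mem_biUnion hiJ hxi
    · rintro ⟨i, hiJ, hxi⟩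
      refine ⟨⟨i, hxi⟩, fun hxD => ?_⟩
      rw [hD, Set.mem_iUnion₂] at hxD
      obtain ⟨j, hjJ, hxj⟩ := hxD
      exact (hdisj i j (by rintro rfl; exact hiJ hjJ)).ne_of_mem hxi hxj rfl
  have hJc : (Jᶜ : Finset (Fin r)).card = r - t := by
    rw [Finset.card_compl, hfr, hJ]
  -- extend Jᶜ to a set K' of t - 1 arms, and then to K'' of t arms
  obtain ⟨K', hK'sub, hK'⟩ := Finset.exists_superset_card_eq (n := t - 1)
    (s := Jᶜ) (by omega) (by rw [hfr]; omega)
  obtain ⟨K'', hK''sub, hK''⟩ := Finset.exists_superset_card_eq (n := t)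
    (s := K') (by omega) (by rw [hfr]; omega)
  set S : Set α := ⋃ i ∈ K', A i with hS
  -- S is a proper subset of the circuit on K'', hence independent
  obtain ⟨hC''circ, -⟩ := hCC K'' hK''
  have hSC : S ⊂ ⋃ i ∈ K'', A i := by
    constructor
    · exact Set.biUnion_subset_biUnion_left hK''sub
    · intro hsub
      obtain ⟨j, hjK'', hjK'⟩ : ∃ j ∈ K'', j ∉ K' := by
        by_contra h
        push_neg at h
        have heq := Finset.eq_of_subset_of_card_le (fun x hx => h x hx) (by omega)
        rw [heq] at hK''
        omega
      obtain ⟨x, hx⟩ := harmne j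
      have hxS : x ∈ S := hsub (Set.mem_biUnion hjK'' hx)
      rw [hS, Set.mem_iUnion₂] at hxS
      obtain ⟨i, hiK', hxi⟩ := hxS
      exact (hdisj j i (by rintro rfl; exact hjK' hiK')).ne_of_mem hx hxi rfl
  have hSE : S ⊆ M.E := hSC.subset.trans hC''circ.1.subset_ground
  have hSindep : M.Indep S := by
    have := hC''circ.2 S hSC
    rwa [Matroid.not_dep_iff hSE] at this
  -- cardinalities
  have hScard : S.encard = ((t - 1) * 2 : ℕ) := by
    rw [hS, encard_biUnion_aux K' hdisj]
    rw [Finset.sum_congr rfl (fun i _ => harm i), Finset.sum_const, hK']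
    simp [mul_comm]
  have hcomplcard : (M.E \ D).encard = ((r - t) * 2 : ℕ) := by
    rw [hcompl, encard_biUnion_aux Jᶜ hdisj]
    rw [Finset.sum_congr rfl (fun i _ => harm i), Finset.sum_const, hJc]
    simp [mul_comm]
  -- use the cocircuit D to find a base inside (M.E \ D) ∪ {e}
  have hDdep : M✶.Dep D := hDcocirc.1
  obtain ⟨e, heD⟩ := hDdep.nonempty
  have hDe : M✶.Indep (D \ {e}) := by
    have h1 : D \ {e} ⊂ D := sdiff_singleton_ssubset.mpr heD
    have := hDcocirc.2 (D \ {e}) h1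
    rwa [Matroid.not_dep_iff (h1.subset.trans hDdep.subset_ground)] at this
  rw [Matroid.dual_indep_iff_exists'] at hDe
  obtain ⟨-, B, hB, hBdisj⟩ := hDe
  have hBsub : B ⊆ (M.E \ D) ∪ {e} := by
    intro x hxB
    by_cases hxD : x ∈ D
    · right
      have : x ∉ D \ {e} := fun h => (hBdisj.symm.ne_of_mem hxB h) rfl
      simp only [Set.mem_diff, Set.mem_singleton_iff, not_and, not_not] at this
      simp [this hxD]
    · exact Or.inl ⟨hB.subset_ground hxB, hxD⟩
  -- base cardinality bounds
  obtain ⟨B', hB', hSB'⟩ := hSindep.exists_isBase_superset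
  have hlow : ((t - 1) * 2 : ℕ) ≤ B.encard := by
    have h1 : S.encard ≤ B'.encard := Set.encard_le_encard hSB'
    rw [hB'.encard_eq_encard_of_isBase hB, hScard] at h1
    exact h1
  have hhigh : B.encard ≤ ((r - t) * 2 + 1 : ℕ) := by
    calc B.encard ≤ ((M.E \ D) ∪ {e}).encard := Set.encard_le_encard hBsub
    _ ≤ (M.E \ D).encard + ({e} : Set α).encard := Set.encard_union_le _ _
    _ = ((r - t) * 2 + 1 : ℕ) := by rw [hcomplcard, Set.encard_singleton]; push_cast; ring
  have : ((t - 1) * 2 : ℕ) ≤ ((r - t) * 2 + 1 : ℕ) := by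
    exact_mod_cast hlow.trans hhigh
  omega
end

section
/- Let M be a t-spike of order r. Then the rank of M equals r and the corank of M (the rank of the dual matroid M*) equals r; in particular |E(M)| = 2r. -/
open Set

namespace SpikeAux

variable {α : Type*} {M : Matroid α} {t r : ℕ} {A : Fin r → Set α}

lemma arm_finite (hA : IsSpike M t r A) (i : Fin r) : (A i).Finite := by
  obtain ⟨a, b, -, hab⟩ := Set.ncard_eq_two.mp (hA.2.1 i)
  rw [hab]
  exact (Set.finite_singleton b).insert a

lemma ground_finite (hA : IsSpike M t r A) : M.E.Finite := by
  rw [← hA.2.2.2.1]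
  exact Set.finite_iUnion (arm_finite hA)

lemma armU_subset_ground (hA : IsSpike M t r A) (S : Finset (Fin r)) :
    (⋃ i ∈ S, A i) ⊆ M.E := by
  rw [← hA.2.2.2.1]
  exact Set.iUnion₂_subset fun i _ => Set.subset_iUnion A i

lemma ncard_armU (hA : IsSpike M t r A) (S : Finset (Fin r)) :
    (⋃ i ∈ S, A i).ncard = 2 * S.card := by
  classical
  induction S using Finset.induction with
  | empty => simp
  | @insert a s ha ih =>
    rw [Finset.set_biUnion_insert]
    have hdisj : Disjoint (A a) (⋃ i ∈ s, A i) := by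
      rw [Set.disjoint_left]
      intro x hxA hxU
      obtain ⟨i, his, hxi⟩ := Set.mem_iUnion₂.mp hxU
      exact Set.disjoint_left.mp (hA.2.2.1 a i (by rintro rfl; exact ha his)) hxA hxi
    rw [Set.ncard_union_eq hdisj (arm_finite hA a)
      ((ground_finite hA).subset (armU_subset_ground hA s)), hA.2.1 a, ih,
      Finset.card_insert_of_notMem ha]
    ring

/-- The rank of a set equals the cardinality of any basis of it (finite ground set). -/
lemma rk_eq_ncard (hEfin : M.E.Finite) {I X : Set α} (hIX : M.IsBasis I X) :
    rk M X = I.ncard := by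
  have hub : ∀ n ∈ {n | ∃ J, J ⊆ X ∧ M.Indep J ∧ J.ncard = n}, n ≤ I.ncard := by
    rintro n ⟨J, hJX, hJ, rfl⟩
    obtain ⟨J', hJ', hJJ'⟩ := hJ.subset_isBasis_of_subset hJX hIX.subset_ground
    have hcard : J'.ncard = I.ncard := by
      rw [Set.ncard_def, hJ'.encard_eq_encard hIX, ← Set.ncard_def]
    calc J.ncard ≤ J'.ncard :=
          Set.ncard_le_ncard hJJ' (hEfin.subset hJ'.indep.subset_ground)
      _ = I.ncard := hcard
  exact le_antisymm (csSup_le ⟨I.ncard, I, hIX.subset, hIX.indep, rfl⟩ hub)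
    (le_csSup ⟨I.ncard, hub⟩ ⟨I, hIX.subset, hIX.indep, rfl⟩)

/-- Key upper bound: a basis of a union of `t + k` arms has at most `t + k + t - 1` elements. -/
lemma basis_armU_bound (hA : IsSpike M t r A) (ht : 0 < t) :
    ∀ (k : ℕ) (S : Finset (Fin r)), S.card = t + k →
      ∀ I, M.IsBasis I (⋃ i ∈ S, A i) → I.ncard + 1 ≤ S.card + t := by
  classical
  have hEfin := ground_finite hA
  obtain ⟨htr, hcard, hdisj, hUnion, hCC⟩ := hA
  intro k
  induction k with
  | zero =>
    intro S hS I hI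
    have hC := (hCC S (by omega)).1
    have hne : I ≠ ⋃ i ∈ S, A i := by
      rintro rfl
      exact hC.1.not_indep hI.indep
    have hfinU : (⋃ i ∈ S, A i).Finite :=
      hEfin.subset (armU_subset_ground ⟨htr, hcard, hdisj, hUnion, hCC⟩ S)
    have hlt := Set.ncard_lt_ncard (HasSubset.Subset.ssubset_of_ne hI.subset hne) hfinU
    rw [ncard_armU ⟨htr, hcard, hdisj, hUnion, hCC⟩ S] at hlt
    omega
  | succ k ih =>
    intro S hS I hI
    have hAsp : IsSpike M t r A := ⟨htr, hcard, hdisj, hUnion, hCC⟩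
    obtain ⟨i, hiS⟩ := Finset.card_pos.mp (by omega : 0 < S.card)
    set S' : Finset (Fin r) := S.erase i with hS'def
    have hS'card : S'.card = t + k := by
      rw [hS'def, Finset.card_erase_of_mem hiS]; omega
    obtain ⟨a, b, hab_ne, hab⟩ := Set.ncard_eq_two.mp (hcard i)
    obtain ⟨T, hTS', hTcard⟩ := Finset.exists_subset_card_eq (s := S') (n := t - 1) (by omega)
    have hiT : i ∉ T := fun h => Finset.notMem_erase i S (hTS' h)
    have hinstT : (insert i T).card = t := by
      rw [Finset.card_insert_of_notMem hiT, hTcard]; omega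
    have hC := (hCC (insert i T) hinstT).1
    set C : Set α := ⋃ j ∈ insert i T, A j with hCdef
    have hCeq : C = A i ∪ ⋃ j ∈ T, A j := Finset.set_biUnion_insert i T A
    have haC : a ∈ C := by
      rw [hCeq, hab]; exact Or.inl (Set.mem_insert a {b})
    -- C \ {a} is independent and a is in its closure
    have hCa_indep : M.Indep (C \ {a}) := by
      have hss : C \ {a} ⊂ C := Set.sdiff_singleton_ssubset.mpr haC
      have := hC.2 _ hss
      exact Matroid.indep_of_not_dep this (Set.diff_subset.trans hC.1.subset_ground)
    have hacl : a ∈ M.closure (C \ {a}) := by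
      have hdep : M.Dep (insert a (C \ {a})) := by
        rw [Set.insert_diff_singleton, Set.insert_eq_self.mpr haC]
        exact hC.1
      exact (hCa_indep.insert_dep_iff.mp hdep).1
    -- C \ {a} sits inside (union of S' arms) ∪ {b}
    have hCsub : C \ {a} ⊆ (⋃ j ∈ S', A j) ∪ {b} := by
      rintro x ⟨hxC, hxa⟩
      rw [hCeq] at hxC
      rcases hxC with hxi | hxT
      · right
        rw [hab] at hxi
        rcases hxi with rfl | rfl
        · exact absurd rfl hxa
        · rfl
      · left
        obtain ⟨j, hjT, hxj⟩ := Set.mem_iUnion₂.mp hxT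
        exact Set.mem_biUnion (hTS' hjT) hxj
    have hbE : b ∈ M.E := by
      apply armU_subset_ground hAsp {i}
      simp [hab]
    have hsubE : (⋃ j ∈ S', A j) ∪ {b} ⊆ M.E :=
      Set.union_subset (armU_subset_ground hAsp S') (Set.singleton_subset_iff.mpr hbE)
    have haU : a ∈ M.closure ((⋃ j ∈ S', A j) ∪ {b}) :=
      M.closure_subset_closure hCsub hacl
    obtain ⟨I', hI'⟩ := M.exists_isBasis (⋃ j ∈ S', A j) (armU_subset_ground hAsp S')
    have hclInt : M.closure (I' ∪ {b}) = M.closure ((⋃ j ∈ S', A j) ∪ {b}) := by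
      rw [← M.closure_union_closure_left_eq, hI'.closure_eq_closure,
        M.closure_union_closure_left_eq]
    have hkey : (⋃ j ∈ S, A j) ⊆ M.closure (I' ∪ {b}) := by
      rw [hclInt, ← Finset.insert_erase hiS, Finset.set_biUnion_insert, ← hS'def]
      apply Set.union_subset
      · rw [hab]
        rintro x (rfl | rfl)
        · exact haU
        · exact M.subset_closure _ hsubE (Or.inr rfl)
      · exact (Set.subset_union_left.trans (M.subset_closure _ hsubE))
    -- compare cardinalities
    obtain ⟨I₂, hI₂, hII₂⟩ := hI.indep.subset_isBasis_of_subset (hI.subset.trans hkey)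
      (M.closure_subset_ground _)
    obtain ⟨K, hK⟩ := M.exists_isBasis (I' ∪ {b})
      (Set.union_subset hI'.indep.subset_ground (Set.singleton_subset_iff.mpr hbE))
    have hK2 : M.IsBasis K (M.closure (I' ∪ {b})) := hK.isBasis_closure_right
    have hI₂K : I₂.ncard = K.ncard := by
      rw [Set.ncard_def, hI₂.encard_eq_encard hK2, ← Set.ncard_def]
    have hKle : K.ncard ≤ I'.ncard + 1 := by
      have h1 : K.ncard ≤ (I' ∪ {b}).ncard :=
        Set.ncard_le_ncard hK.subset (hEfin.subset
          (Set.union_subset hI'.indep.subset_ground (Set.singleton_subset_iff.mpr hbE)))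
      have h2 := Set.ncard_union_le I' ({b} : Set α)
      simp only [Set.ncard_singleton] at h2
      omega
    have hIle : I.ncard ≤ I₂.ncard :=
      Set.ncard_le_ncard hII₂ (hEfin.subset hI₂.indep.subset_ground)
    have hIH := ih S' hS'card I' hI'
    omega

lemma base_ncard_le (hA : IsSpike M t r A) (ht : 0 < t) {B : Set α} (hB : M.IsBase B) :
    B.ncard ≤ r := by
  classical
  have hEfin := ground_finite hA
  obtain ⟨htr, hcard, hdisj, hUnion, hCC⟩ := hA
  have hAsp : IsSpike M t r A := ⟨htr, hcard, hdisj, hUnion, hCC⟩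
  obtain ⟨S, -, hScard⟩ := Finset.exists_subset_card_eq (s := (Finset.univ : Finset (Fin r))) (n := t)
    (by simpa using htr)
  have hCo : IsCocircuit M (⋃ i ∈ S, A i) := (hCC S hScard).2
  -- complement of the union of S-arms is the union of Sᶜ-arms
  have hcompl : M.E \ (⋃ i ∈ S, A i) = ⋃ i ∈ Sᶜ, A i := by
    apply subset_antisymm
    · rintro x ⟨hxE, hxS⟩
      rw [← hUnion] at hxE
      obtain ⟨i, hxi⟩ := Set.mem_iUnion.mp hxE
      refine Set.mem_biUnion (Finset.mem_compl.mpr fun hiS => hxS ?_) hxi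
      exact Set.mem_biUnion hiS hxi
    · rintro x hx
      obtain ⟨i, hiS, hxi⟩ := Set.mem_iUnion₂.mp hx
      refine ⟨armU_subset_ground hAsp Sᶜ hx, fun hxS => ?_⟩
      obtain ⟨j, hjS, hxj⟩ := Set.mem_iUnion₂.mp hxS
      have hij : i ≠ j := by
        rintro rfl; exact Finset.mem_compl.mp hiS hjS
      exact Set.disjoint_left.mp (hdisj i j hij) hxi hxj
  -- pick an element of the cocircuit
  obtain ⟨i0, hi0⟩ := Finset.card_pos.mp (by omega : 0 < S.card)
  obtain ⟨a, b, hab_ne, hab⟩ := Set.ncard_eq_two.mp (hcard i0)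
  have haU : a ∈ ⋃ i ∈ S, A i := Set.mem_biUnion hi0 (by rw [hab]; exact Or.inl rfl)
  -- the cocircuit minus a point is coindependent, so its complement is spanning
  have hcoind : M.Coindep ((⋃ i ∈ S, A i) \ {a}) := by
    have hss : (⋃ i ∈ S, A i) \ {a} ⊂ ⋃ i ∈ S, A i := Set.sdiff_singleton_ssubset.mpr haU
    have hnd := hCo.2 _ hss
    rw [Matroid.coindep_def]
    exact Matroid.indep_of_not_dep hnd (Set.diff_subset.trans (armU_subset_ground hAsp S))
  have hspan : M.Spanning (M.E \ ((⋃ i ∈ S, A i) \ {a})) := hcoind.compl_spanning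
  have hset : M.E \ ((⋃ i ∈ S, A i) \ {a}) = (⋃ i ∈ Sᶜ, A i) ∪ {a} := by
    rw [Set.diff_diff_right, hcompl]
    congr 1
    rw [Set.inter_eq_self_of_subset_right]
    exact Set.singleton_subset_iff.mpr (armU_subset_ground hAsp S haU)
  rw [hset] at hspan
  obtain ⟨B', hB', hB'sub⟩ := hspan.exists_isBase_subset
  -- bound the rank of the union of Sᶜ arms by r - 1
  obtain ⟨I, hI, hBI⟩ := (hB'.indep.diff {a}).subset_isBasis_of_subset
    (by rw [Set.diff_subset_iff, Set.union_comm]; exact hB'sub)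
    (armU_subset_ground hAsp Sᶜ)
  have hIbound : I.ncard + 1 ≤ r := by
    have hSc : Sᶜ.card = r - t := by
      rw [Finset.card_compl, hScard]; simp
    by_cases hcase : t ≤ r - t
    · have := basis_armU_bound hAsp ht (r - t - t) Sᶜ (by omega) I hI
      omega
    · have h1 : I.ncard ≤ (⋃ i ∈ Sᶜ, A i).ncard :=
        Set.ncard_le_ncard hI.subset (hEfin.subset (armU_subset_ground hAsp Sᶜ))
      rw [ncard_armU hAsp, hSc] at h1
      omega
  have h2 : B'.ncard ≤ (B' \ {a}).ncard + 1 := by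
    have hsub2 : B' ⊆ insert a (B' \ {a}) := by
      rw [Set.insert_diff_singleton]; exact Set.subset_insert a B'
    calc B'.ncard ≤ (insert a (B' \ {a})).ncard :=
          Set.ncard_le_ncard hsub2 (((hEfin.subset hB'.subset_ground).diff (t := {a})).insert a)
      _ ≤ (B' \ {a}).ncard + 1 := Set.ncard_insert_le a _
  have h3 : (B' \ {a}).ncard ≤ I.ncard :=
    Set.ncard_le_ncard hBI (hEfin.subset hI.indep.subset_ground)
  have h4 : B.ncard = B'.ncard := hB.ncard_eq_ncard_of_isBase hB'
  omega

lemma IsSpike.dual (hA : IsSpike M t r A) : IsSpike M✶ t r A := by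
  obtain ⟨htr, hcard, hdisj, hUnion, hCC⟩ := hA
  refine ⟨htr, hcard, hdisj, by simpa using hUnion, fun I hI => ⟨(hCC I hI).2, ?_⟩⟩
  show IsCircuit M✶✶ _
  rw [Matroid.dual_dual]
  exact (hCC I hI).1

end SpikeAux

theorem statement15 {α : Type*} (M : Matroid α) (t r : ℕ) (ht : 0 < t)
    (A : Fin r → Set α) (hA : IsSpike M t r A) :
    rk M M.E = r ∧ rk M✶ M✶.E = r ∧ M.E.ncard = 2 * r := by
  classical
  have hEfin : M.E.Finite := SpikeAux.ground_finite hA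
  have hAd : IsSpike M✶ t r A := SpikeAux.IsSpike.dual hA
  obtain ⟨B, hB⟩ := M.exists_isBase
  have hB' : M✶.IsBase (M.E \ B) := hB.compl_isBase_dual
  have hn : B.ncard ≤ r := SpikeAux.base_ncard_le hA ht hB
  have hn' : (M.E \ B).ncard ≤ r := SpikeAux.base_ncard_le hAd ht hB'
  have hE2r : M.E.ncard = 2 * r := by
    have hU : (⋃ i ∈ (Finset.univ : Finset (Fin r)), A i) = M.E := by
      rw [← hA.2.2.2.1]; simp
    have := SpikeAux.ncard_armU hA Finset.univ
    rw [hU] at this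
    simpa using this
  have hsum : B.ncard + (M.E \ B).ncard = M.E.ncard := by
    rw [← Set.ncard_union_eq Set.disjoint_sdiff_right (hEfin.subset hB.subset_ground)
      (hEfin.diff (t := B)), Set.union_diff_cancel hB.subset_ground]
  have hrk1 : rk M M.E = B.ncard := SpikeAux.rk_eq_ncard hEfin hB.isBasis_ground
  have hrk2 : rk M✶ M✶.E = (M.E \ B).ncard :=
    SpikeAux.rk_eq_ncard (M := M✶) hEfin hB'.isBasis_ground
  refine ⟨?_, ?_, hE2r⟩ <;> omega
end

section
/- Let t ≥ 2 and let M be a t-spike of order at least 4t − 4. Then M is (2t−1)-connected; that is, for every k < 2t − 1, there is no partition (P, Q) of E(M) with |P| ≥ k, |Q| ≥ k, and λ(P) < k. -/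
open Set

namespace IsSpike

variable {α : Type*} {M : Matroid α} {t r : ℕ} {A : Fin r → Set α}

lemma dual_spike (h : IsSpike M t r A) : IsSpike M✶ t r A := by
  obtain ⟨h1, h2, h3, h4, h5⟩ := h
  refine ⟨h1, h2, h3, by simpa using h4, fun I hI => ?_⟩
  obtain ⟨hc, hcc⟩ := h5 I hI
  refine ⟨hcc, ?_⟩
  simpa [IsCocircuit, Matroid.dual_dual] using hc

variable (hA : IsSpike M t r A)
include hA

lemma arm_fin (i : Fin r) : (A i).Finite :=
  finite_of_ncard_ne_zero (by rw [hA.2.1 i]; norm_num)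

lemma arm_nonempty (i : Fin r) : (A i).Nonempty :=
  nonempty_of_ncard_ne_zero (by rw [hA.2.1 i]; norm_num)

lemma arm_subset_ground (i : Fin r) : A i ⊆ M.E :=
  hA.2.2.2.1 ▸ subset_iUnion A i

lemma ground_eq : M.E = ⋃ i, A i := hA.2.2.2.1.symm

lemma ground_finite : M.E.Finite := by
  rw [hA.ground_eq]; exact finite_iUnion fun i => hA.arm_fin i

lemma armUnion_subset_ground (S : Finset (Fin r)) : (⋃ i ∈ S, A i) ⊆ M.E :=
  iUnion₂_subset fun i _ => hA.arm_subset_ground i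

lemma armUnion_finite (S : Finset (Fin r)) : (⋃ i ∈ S, A i).Finite :=
  S.finite_toSet.biUnion (fun i _ => hA.arm_fin i)

lemma disjoint_arm_armUnion {j : Fin r} {S : Finset (Fin r)} (hj : j ∉ S) :
    Disjoint (A j) (⋃ i ∈ S, A i) := by
  refine Set.disjoint_left.2 fun x hx hx' => ?_
  obtain ⟨i, hi, hxi⟩ := mem_iUnion₂.1 hx'
  exact Set.disjoint_left.1 (hA.2.2.1 j i (fun h => hj (h ▸ hi))) hx hxi

lemma armUnion_ncard (S : Finset (Fin r)) : (⋃ i ∈ S, A i).ncard = 2 * S.card := by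
  classical
  induction S using Finset.induction_on with
  | empty => simp
  | @insert j S hj ih =>
    rw [Finset.set_biUnion_insert,
      ncard_union_eq (hA.disjoint_arm_armUnion hj) (hA.arm_fin j) (hA.armUnion_finite S),
      hA.2.1 j, ih, Finset.card_insert_of_notMem hj]
    ring

lemma indep_armUnion (S : Finset (Fin r)) (hS : S.card < t) : M.Indep (⋃ i ∈ S, A i) := by
  classical
  obtain ⟨T, hST, _, hT⟩ := Finset.exists_subsuperset_card_eq (Finset.subset_univ S)
    (le_of_lt hS) (by simpa using hA.1)
  have hcirc := (hA.2.2.2.2 T hT).1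
  have hne : S ≠ T := by rintro rfl; omega
  have hss : (⋃ i ∈ S, A i) ⊂ (⋃ i ∈ T, A i) := by
    obtain ⟨j, hjT, hjS⟩ := Finset.exists_of_ssubset (lt_of_le_of_ne hST hne)
    refine ⟨Set.biUnion_subset_biUnion_left hST, fun hsub => ?_⟩
    obtain ⟨x, hx⟩ := hA.arm_nonempty j
    exact Set.disjoint_left.1 (hA.disjoint_arm_armUnion hjS) hx
      (hsub (mem_biUnion hjT hx))
  have := hcirc.2 _ hss
  rw [← Matroid.not_dep_iff (hA.armUnion_subset_ground S)]
  exact this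


lemma not_mem_closure_of_fresh (ht : 1 ≤ t) (S : Finset (Fin r)) (hS : S.card + t ≤ r)
    {X : Set α} (hX : X ⊆ ⋃ i ∈ S, A i) {j : Fin r} (hj : j ∉ S) {e : α} (he : e ∈ A j) :
    e ∉ M.closure X := by
  classical
  have hcompl : t - 1 ≤ (insert j S)ᶜ.card := by
    have h1 : (insert j S)ᶜ.card = r - (insert j S).card := by
      rw [Finset.card_compl, Fintype.card_fin]
    have h2 : (insert j S).card ≤ S.card + 1 := Finset.card_insert_le j S
    omega
  obtain ⟨T, hTsub, hTcard⟩ := Finset.exists_subset_card_eq hcompl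
  have hjT : j ∉ T := fun h => by simpa using hTsub h
  have hcardC : (insert j T).card = t := by
    rw [Finset.card_insert_of_notMem hjT, hTcard]; omega
  set C := ⋃ i ∈ insert j T, A i with hCdef
  have hCE : C ⊆ M.E := hA.armUnion_subset_ground _
  have hcocirc := (hA.2.2.2.2 _ hcardC).2
  have hdep : M✶.Dep C := hcocirc.1
  have hSdisj : Disjoint (⋃ i ∈ S, A i) C := by
    refine Set.disjoint_left.2 fun x hx hx' => ?_
    obtain ⟨i, hi, hxi⟩ := mem_iUnion₂.1 hx
    obtain ⟨i', hi', hxi'⟩ := mem_iUnion₂.1 hx'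
    have hne : i ≠ i' := by
      rintro rfl
      rcases Finset.mem_insert.1 hi' with h | h
      · exact hj (h ▸ hi)
      · exact (by simpa using hTsub h : ¬ (i = j ∨ i ∈ S)) (Or.inr hi)
    exact Set.disjoint_left.1 (hA.2.2.1 i i' hne) hxi hxi'
  have hXsub : X ⊆ M.E \ C :=
    subset_diff.2 ⟨hX.trans (hA.armUnion_subset_ground S), (hSdisj.mono_left hX)⟩
  have heC : e ∈ C := mem_biUnion (Finset.mem_insert_self j T) he
  have heE : e ∈ M.E := hA.arm_subset_ground j he
  intro hecl
  have hecl2 : e ∈ M.closure (M.E \ C) := M.closure_subset_closure hXsub hecl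
  -- C \ {e} is coindependent, so (M.E \ C) ∪ {e} is spanning
  have hssC : C \ {e} ⊂ C := sdiff_singleton_ssubset.2 heC
  have hcoind : M✶.Indep (C \ {e}) := by
    rw [← Matroid.not_dep_iff ((diff_subset.trans hCE) : C \ {e} ⊆ M✶.E)]
    exact hcocirc.2 _ hssC
  have hspan : M.Spanning (M.E \ (C \ {e})) := Matroid.Coindep.compl_spanning hcoind
  have hseteq : M.E \ (C \ {e}) = insert e (M.E \ C) := by
    ext x
    simp only [mem_diff, mem_singleton_iff, mem_insert_iff, not_and, not_not]
    constructor
    · rintro ⟨hxE, hx⟩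
      by_cases hxC : x ∈ C
      · exact Or.inl (hx hxC)
      · exact Or.inr ⟨hxE, hxC⟩
    · rintro (rfl | ⟨hxE, hxC⟩)
      · exact ⟨heE, fun _ => rfl⟩
      · exact ⟨hxE, fun h => absurd h hxC⟩
  have hspan2 : M.closure (insert e (M.E \ C)) = M.E := by
    rw [← hseteq]; exact hspan.closure_eq
  have hstep : M.closure (insert e (M.E \ C)) ⊆ M.closure (M.E \ C) :=
    M.closure_subset_closure_of_subset_closure
      (insert_subset hecl2 (M.subset_closure _ diff_subset))
  have hEsub : M.E ⊆ M.closure (M.E \ C) := (hspan2.symm.subset).trans hstep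
  have hspan3 : M.Spanning (M.E \ C) := by
    rw [Matroid.spanning_iff_closure_eq diff_subset]
    exact subset_antisymm (M.closure_subset_ground _) hEsub
  have : M.Coindep C := (Matroid.coindep_iff_compl_spanning hCE).2 hspan3
  exact hdep.not_indep this

lemma indep_mix (ht : 1 ≤ t) (x : Fin r → α) (hx : ∀ i, x i ∈ A i)
    (F : Finset (Fin r)) (hF : F.card < t) (G : Finset (Fin r))
    (hdisjFG : Disjoint F G) (hcard : F.card + G.card + t ≤ r + 1) :
    M.Indep ((⋃ i ∈ F, A i) ∪ (x '' G)) := by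
  classical
  induction G using Finset.induction_on with
  | empty => simpa using hA.indep_armUnion F hF
  | @insert j G hjG ih =>
    have hcard' : (insert j G).card = G.card + 1 := Finset.card_insert_of_notMem hjG
    have hI := ih (hdisjFG.mono_right (Finset.subset_insert j G)) (by omega)
    have hrw : (⋃ i ∈ F, A i) ∪ (x '' ↑(insert j G)) =
        insert (x j) ((⋃ i ∈ F, A i) ∪ x '' ↑G) := by
      rw [Finset.coe_insert, image_insert_eq, union_insert]
    rw [hrw, hI.insert_indep_iff]
    left
    have hjF : j ∉ F := fun h =>
      Finset.disjoint_left.1 hdisjFG h (Finset.mem_insert_self j G)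
    refine ⟨hA.arm_subset_ground j (hx j), ?_⟩
    refine hA.not_mem_closure_of_fresh ht (F ∪ G) ?_ ?_ (by simp [hjF, hjG]) (hx j)
    · have := Finset.card_union_le F G; omega
    · refine union_subset ?_ ?_
      · exact Set.biUnion_subset_biUnion_left
          (fun i hi => Finset.mem_coe.2 (Finset.mem_union_left G (Finset.mem_coe.1 hi)))
      · rintro y ⟨i, hi, rfl⟩
        exact mem_biUnion (Finset.mem_union_right F (Finset.mem_coe.1 hi)) (hx i)

lemma ncard_mix (x : Fin r → α) (hx : ∀ i, x i ∈ A i) (F G : Finset (Fin r))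
    (hFG : Disjoint F G) :
    ((⋃ i ∈ F, A i) ∪ x '' ↑G).ncard = 2 * F.card + G.card := by
  have hinj : Set.InjOn x ↑G := by
    intro i hi i' hi' hxx
    by_contra hne
    exact Set.disjoint_left.1 (hA.2.2.1 i i' hne) (hx i) (hxx ▸ hx i')
  have hdisj : Disjoint (⋃ i ∈ F, A i) (x '' ↑G) := by
    refine Set.disjoint_right.2 ?_
    rintro y ⟨i, hi, rfl⟩ hy
    obtain ⟨i', hi', hyi'⟩ := mem_iUnion₂.1 hy
    have hne : i' ≠ i := fun h => Finset.disjoint_left.1 hFG (h ▸ hi') (Finset.mem_coe.1 hi)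
    exact Set.disjoint_left.1 (hA.2.2.1 i' i hne) hyi' (hx i)
  rw [ncard_union_eq hdisj (hA.armUnion_finite F) (G.finite_toSet.image x),
    hA.armUnion_ncard F, ncard_image_of_injOn hinj, ncard_coe_finset]


lemma exists_indep_ncard_r (ht : 2 ≤ t) (hrt : 2 * t ≤ r + 2) :
    ∃ J, M.Indep J ∧ J ⊆ M.E ∧ J.ncard = r := by
  classical
  have hcardF : t - 1 ≤ (Finset.univ : Finset (Fin r)).card := by
    simp only [Finset.card_univ, Fintype.card_fin]
    have := hA.1; omega
  obtain ⟨F, -, hFcard⟩ := Finset.exists_subset_card_eq hcardF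
  have hcardG : r + 2 - 2 * t ≤ (Finset.univ \ F).card := by
    rw [Finset.card_sdiff_of_subset (Finset.subset_univ F), hFcard]
    simp only [Finset.card_univ, Fintype.card_fin]
    have := hA.1; omega
  obtain ⟨G, hGsub, hGcard⟩ := Finset.exists_subset_card_eq hcardG
  have hFG : Disjoint F G := by
    refine Finset.disjoint_left.2 fun i hiF hiG => ?_
    exact (Finset.mem_sdiff.1 (hGsub hiG)).2 hiF
  set x : Fin r → α := fun i => (hA.arm_nonempty i).some with hxdef
  have hx : ∀ i, x i ∈ A i := fun i => (hA.arm_nonempty i).some_mem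
  refine ⟨(⋃ i ∈ F, A i) ∪ x '' ↑G, ?_, ?_, ?_⟩
  · refine hA.indep_mix (by omega) x hx F (by omega) G hFG (by omega)
  · refine union_subset (hA.armUnion_subset_ground F) ?_
    rintro y ⟨i, -, rfl⟩; exact hA.arm_subset_ground i (hx i)
  · rw [hA.ncard_mix x hx F G hFG, hFcard, hGcard]; omega

lemma ground_ncard : M.E.ncard = 2 * r := by
  classical
  have h : M.E = ⋃ i ∈ (Finset.univ : Finset (Fin r)), A i := by
    rw [hA.ground_eq]; simp
  rw [h, hA.armUnion_ncard]
  simp [Finset.card_univ]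

lemma indep_ncard_le_r (ht : 2 ≤ t) (hrt : 2 * t ≤ r + 2) {I : Set α} (hI : M.Indep I) :
    I.ncard ≤ r := by
  obtain ⟨B, hB, hIB⟩ := hI.exists_isBase_superset
  have hAd := dual_spike hA
  obtain ⟨J, hJ, hJE, hJcard⟩ := hAd.exists_indep_ncard_r ht hrt
  obtain ⟨B2, hB2, hJB2⟩ := hJ.exists_isBase_superset
  have hEfin : M.E.Finite := hA.ground_finite
  have hB2E : B2 ⊆ M.E := hB2.subset_ground
  have hB2card : r ≤ B2.ncard := hJcard ▸ ncard_le_ncard hJB2 (hEfin.subset hB2E)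
  have hdualbase : M✶.IsBase (M.E \ B) := by
    rw [Matroid.dual_isBase_iff diff_subset]
    rwa [diff_diff_cancel_left hB.subset_ground]
  have hcc : (M.E \ B).ncard = B2.ncard := hdualbase.ncard_eq_ncard_of_isBase hB2
  have hdiff : (M.E \ B).ncard = M.E.ncard - B.ncard := ncard_diff hB.subset_ground (hEfin.subset hB.subset_ground)
  have hBle : B.ncard ≤ M.E.ncard := ncard_le_ncard hB.subset_ground hEfin
  have hEcard : M.E.ncard = 2 * r := hA.ground_ncard
  have hIle : I.ncard ≤ B.ncard := ncard_le_ncard hIB (hEfin.subset hB.subset_ground)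
  omega

lemma le_rk_of_indep {X I : Set α} (hI : M.Indep I) (hIX : I ⊆ X) : I.ncard ≤ rk M X := by
  have hEfin : M.E.Finite := hA.ground_finite
  refine le_csSup ⟨M.E.ncard, ?_⟩ ⟨I, hIX, hI, rfl⟩
  rintro n ⟨J, -, hJ, rfl⟩
  exact ncard_le_ncard hJ.subset_ground hEfin

lemma rk_ground_eq (ht : 2 ≤ t) (hrt : 2 * t ≤ r + 2) : rk M M.E = r := by
  refine le_antisymm ?_ ?_
  · refine csSup_le ⟨0, ∅, by simp⟩ ?_
    rintro n ⟨I, -, hI, rfl⟩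
    exact hA.indep_ncard_le_r ht hrt hI
  · obtain ⟨J, hJ, hJE, hJcard⟩ := hA.exists_indep_ncard_r ht hrt
    exact hJcard ▸ hA.le_rk_of_indep hJ hJE

lemma rk_lower (ht : 2 ≤ t) (hrt : 2 * t ≤ r + 2) {P : Set α}
    (Fa Fp : Finset (Fin r)) (hFa : ∀ i ∈ Fa, A i ⊆ P)
    (hFp : ∀ i ∈ Fp, (A i ∩ P).Nonempty) (hsub : Fa ⊆ Fp) :
    min (t - 1) Fa.card + min Fp.card (r + 1 - t) ≤ rk M P := by
  classical
  set f := min (t - 1) Fa.card with hfdef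
  set m := min Fp.card (r + 1 - t) with hmdef
  have hfm : f ≤ m := by
    have h1 : f ≤ Fa.card := min_le_right _ _
    have h2 : Fa.card ≤ Fp.card := Finset.card_le_card hsub
    have h3 : f ≤ t - 1 := min_le_left _ _
    have := hA.1
    omega
  obtain ⟨F, hFsub, hFcard⟩ := Finset.exists_subset_card_eq (min_le_right (t-1) Fa.card)
  have hcardG : m - f ≤ (Fp \ F).card := by
    rw [Finset.card_sdiff_of_subset (hFsub.trans hsub), hFcard]
    have : m ≤ Fp.card := min_le_left _ _
    omega
  obtain ⟨G, hGsub, hGcard⟩ := Finset.exists_subset_card_eq hcardG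
  have hFG : Disjoint F G := by
    refine Finset.disjoint_left.2 fun i hiF hiG => ?_
    exact (Finset.mem_sdiff.1 (hGsub hiG)).2 hiF
  set x : Fin r → α := fun i =>
    if h : (A i ∩ P).Nonempty then h.some else (hA.arm_nonempty i).some with hxdef
  have hx : ∀ i, x i ∈ A i := by
    intro i
    by_cases h : (A i ∩ P).Nonempty
    · simp only [hxdef, dif_pos h]; exact h.some_mem.1
    · simp only [hxdef, dif_neg h]; exact (hA.arm_nonempty i).some_mem
  have hxP : ∀ i ∈ Fp, x i ∈ P := by
    intro i hi
    have h := hFp i hi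
    simp only [hxdef, dif_pos h]
    exact h.some_mem.2
  set I := (⋃ i ∈ F, A i) ∪ x '' ↑G with hIdef
  have hIindep : M.Indep I := by
    refine hA.indep_mix (by omega) x hx F ?_ G hFG ?_
    · have : f ≤ t - 1 := min_le_left _ _
      omega
    · have h1 : m ≤ r + 1 - t := min_le_right _ _
      have := hA.1
      rw [hFcard, hGcard]
      omega
  have hIP : I ⊆ P := by
    refine union_subset ?_ ?_
    · exact iUnion₂_subset fun i hi => hFa i (hFsub hi)
    · rintro y ⟨i, hi, rfl⟩
      exact hxP i ((Finset.mem_sdiff.1 (hGsub (Finset.mem_coe.1 hi))).1)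
  have hIcard : I.ncard = 2 * f + (m - f) := by
    rw [hIdef, hA.ncard_mix x hx F G hFG, hFcard, hGcard]
  have := hA.le_rk_of_indep hIindep hIP
  omega


lemma ncard_biUnion_inter (P : Set α) (S : Finset (Fin r)) :
    (⋃ i ∈ S, (A i ∩ P)).ncard = ∑ i ∈ S, (A i ∩ P).ncard := by
  classical
  induction S using Finset.induction_on with
  | empty => simp
  | @insert j S hj ih =>
    have hdisj : Disjoint (A j ∩ P) (⋃ i ∈ S, (A i ∩ P)) := by
      refine Disjoint.mono inter_subset_left (iUnion₂_subset fun i hi => ?_)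
        (hA.disjoint_arm_armUnion hj)
      exact inter_subset_left.trans (subset_biUnion_of_mem (u := A) hi)
    rw [Finset.set_biUnion_insert, ncard_union_eq hdisj
      ((hA.arm_fin j).subset inter_subset_left)
      (S.finite_toSet.biUnion fun i _ => (hA.arm_fin i).subset inter_subset_left),
      ih, Finset.sum_insert hj]

lemma ncard_eq_sum_inter (P : Set α) (hP : P ⊆ M.E) :
    P.ncard = ∑ i, (A i ∩ P).ncard := by
  classical
  have hPU : P = ⋃ i ∈ (Finset.univ : Finset (Fin r)), (A i ∩ P) := by
    ext y
    simp only [mem_iUnion, mem_inter_iff, Finset.mem_univ, exists_prop, true_and, exists_and_right]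
    constructor
    · intro hy
      have : y ∈ ⋃ i, A i := hA.2.2.2.1.symm ▸ hP hy
      obtain ⟨i, hi⟩ := mem_iUnion.1 this
      exact ⟨⟨i, hi⟩, hy⟩
    · rintro ⟨-, hy⟩; exact hy
  calc P.ncard = (⋃ i ∈ (Finset.univ : Finset (Fin r)), (A i ∩ P)).ncard := by rw [← hPU]
    _ = ∑ i, (A i ∩ P).ncard := hA.ncard_biUnion_inter P Finset.univ

end IsSpike

theorem statement18 {α : Type*} (M : Matroid α) (t r : ℕ) (ht : 2 ≤ t)
    (hr : 4 * t - 4 ≤ r) (A : Fin r → Set α) (hA : IsSpike M t r A) :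
    ∀ k : ℕ, k < 2 * t - 1 →
      ¬ ∃ P Q : Set α, P ∪ Q = M.E ∧ Disjoint P Q ∧
        k ≤ P.ncard ∧ k ≤ Q.ncard ∧ lambda M P < (k : ℤ) := by
  classical
  intro k hk
  rintro ⟨P, Q, hPQ, hdisj, hkP, hkQ, hlam⟩
  have htr := hA.1
  have hrt : 2 * t ≤ r + 2 := by omega
  have hPE : P ⊆ M.E := hPQ ▸ subset_union_left
  have hQE : Q ⊆ M.E := hPQ ▸ subset_union_right
  have hQeq : M.E \ P = Q := by
    rw [← hPQ]
    ext y
    simp only [mem_diff, mem_union]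
    constructor
    · rintro ⟨hy | hy, hyP⟩
      · exact absurd hy hyP
      · exact hy
    · intro hy
      exact ⟨Or.inr hy, fun hyP => Set.disjoint_left.1 hdisj hyP hy⟩
  set Fa := Finset.univ.filter (fun i => A i ⊆ P) with hFadef
  set Fb := Finset.univ.filter (fun i => A i ⊆ Q) with hFbdef
  set Fp := Finset.univ.filter (fun i => (A i ∩ P).Nonempty) with hFpdef
  set Fq := Finset.univ.filter (fun i => (A i ∩ Q).Nonempty) with hFqdef
  have hmemFa : ∀ i, i ∈ Fa ↔ A i ⊆ P := by intro i; simp [hFadef]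
  have hmemFb : ∀ i, i ∈ Fb ↔ A i ⊆ Q := by intro i; simp [hFbdef]
  have hmemFp : ∀ i, i ∈ Fp ↔ (A i ∩ P).Nonempty := by intro i; simp [hFpdef]
  have hmemFq : ∀ i, i ∈ Fq ↔ (A i ∩ Q).Nonempty := by intro i; simp [hFqdef]
  have hFaFp : Fa ⊆ Fp := by
    intro i hi
    obtain ⟨y, hy⟩ := hA.arm_nonempty i
    exact (hmemFp i).2 ⟨y, hy, (hmemFa i).1 hi hy⟩
  have hFbFq : Fb ⊆ Fq := by
    intro i hi
    obtain ⟨y, hy⟩ := hA.arm_nonempty i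
    exact (hmemFq i).2 ⟨y, hy, (hmemFb i).1 hi hy⟩
  have hcomplP : ∀ i, (A i ∩ Q).Nonempty ↔ ¬ (A i ⊆ P) := by
    intro i
    constructor
    · rintro ⟨y, hyA, hyQ⟩ hsub
      exact Set.disjoint_left.1 hdisj (hsub hyA) hyQ
    · intro hnsub
      obtain ⟨y, hyA, hyP⟩ := not_subset.1 hnsub
      have : y ∈ P ∪ Q := hPQ ▸ hA.arm_subset_ground i hyA
      exact ⟨y, hyA, this.resolve_left hyP⟩
  have hcomplQ : ∀ i, (A i ∩ P).Nonempty ↔ ¬ (A i ⊆ Q) := by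
    intro i
    constructor
    · rintro ⟨y, hyA, hyP⟩ hsub
      exact Set.disjoint_left.1 hdisj hyP (hsub hyA)
    · intro hnsub
      obtain ⟨y, hyA, hyQ⟩ := not_subset.1 hnsub
      have : y ∈ P ∪ Q := hPQ ▸ hA.arm_subset_ground i hyA
      exact ⟨y, hyA, this.resolve_right hyQ⟩
  have hcard1 : Fa.card + Fq.card = r := by
    have h1 : Fq = Finset.univ.filter (fun i => ¬ (A i ⊆ P)) := by
      ext i; simp [hFqdef, hcomplP i]
    rw [h1]
    have := Finset.card_filter_add_card_filter_not (s := (Finset.univ : Finset (Fin r)))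
      (p := fun i => A i ⊆ P)
    simpa [hFadef, Finset.card_univ] using this
  have hcard2 : Fb.card + Fp.card = r := by
    have h1 : Fp = Finset.univ.filter (fun i => ¬ (A i ⊆ Q)) := by
      ext i; simp [hFpdef, hcomplQ i]
    rw [h1]
    have := Finset.card_filter_add_card_filter_not (s := (Finset.univ : Finset (Fin r)))
      (p := fun i => A i ⊆ Q)
    simpa [hFbdef, Finset.card_univ] using this
  -- cardinality of a side
  have hsidecard : ∀ (X : Set α) (FX FX' : Finset (Fin r)), X ⊆ M.E →
      (∀ i, i ∈ FX ↔ A i ⊆ X) → (∀ i, i ∈ FX' ↔ (A i ∩ X).Nonempty) → FX ⊆ FX' →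
      X.ncard = 2 * FX.card + (FX'.card - FX.card) := by
    intro X FX FX' hXE hmX hmX' hsub
    rw [hA.ncard_eq_sum_inter X hXE]
    have hzero : ∀ i ∈ Finset.univ, i ∉ FX' → (A i ∩ X).ncard = 0 := by
      intro i _ hi
      rw [not_nonempty_iff_eq_empty.1 (fun h => hi ((hmX' i).2 h))]
      simp
    rw [← Finset.sum_subset (Finset.subset_univ FX') hzero]
    rw [← Finset.sum_sdiff hsub]
    have h2 : ∀ i ∈ FX, (A i ∩ X).ncard = 2 := by
      intro i hi
      rw [inter_eq_left.2 ((hmX i).1 hi)]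
      exact hA.2.1 i
    have h1 : ∀ i ∈ FX' \ FX, (A i ∩ X).ncard = 1 := by
      intro i hi
      obtain ⟨hi', hinot⟩ := Finset.mem_sdiff.1 hi
      obtain ⟨u, v, huv, hAi⟩ := ncard_eq_two.1 (hA.2.1 i)
      have hnsub : ¬ A i ⊆ X := fun h => hinot ((hmX i).2 h)
      obtain ⟨y, hyA, hyX⟩ := (hmX' i).1 hi'
      rw [hAi] at hyA hnsub ⊢
      rcases hyA with rfl | rfl
      · have hvX : v ∉ X := fun hv => hnsub (by intro z hz; rcases hz with rfl | rfl <;> assumption)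
        have : {y, v} ∩ X = {y} := by
          ext z
          simp only [mem_inter_iff, mem_insert_iff, mem_singleton_iff]
          constructor
          · rintro ⟨rfl | rfl, hzX⟩
            · rfl
            · exact absurd hzX hvX
          · rintro rfl; exact ⟨Or.inl rfl, hyX⟩
        rw [this]; simp
      · have huX : u ∉ X := fun hu => hnsub (by intro z hz; rcases hz with rfl | rfl <;> assumption)
        have : {u, y} ∩ X = {y} := by
          ext z
          simp only [mem_inter_iff, mem_insert_iff, mem_singleton_iff]
          constructor
          · rintro ⟨rfl | rfl, hzX⟩
            · exact absurd hzX huX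
            · rfl
          · rintro rfl; exact ⟨Or.inr rfl, hyX⟩
        rw [this]; simp
    rw [Finset.sum_congr rfl h1, Finset.sum_congr rfl h2]
    simp only [Finset.sum_const, smul_eq_mul, mul_one, Finset.card_sdiff_of_subset hsub]
    omega
  have hPcard : P.ncard = 2 * Fa.card + (Fp.card - Fa.card) :=
    hsidecard P Fa Fp hPE hmemFa hmemFp hFaFp
  have hQcard : Q.ncard = 2 * Fb.card + (Fq.card - Fb.card) :=
    hsidecard Q Fb Fq hQE hmemFb hmemFq hFbFq
  have hrkP : min (t - 1) Fa.card + min Fp.card (r + 1 - t) ≤ rk M P :=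
    hA.rk_lower ht hrt Fa Fp (fun i hi => (hmemFa i).1 hi) (fun i hi => (hmemFp i).1 hi) hFaFp
  have hrkQ : min (t - 1) Fb.card + min Fq.card (r + 1 - t) ≤ rk M Q :=
    hA.rk_lower ht hrt Fb Fq (fun i hi => (hmemFb i).1 hi) (fun i hi => (hmemFq i).1 hi) hFbFq
  have hrkE : rk M M.E = r := hA.rk_ground_eq ht hrt
  rw [lambda, hQeq, hrkE] at hlam
  have hsum : rk M P + rk M Q < k + r := by omega
  have haFp : Fa.card ≤ Fp.card := Finset.card_le_card hFaFp
  have hbFq : Fb.card ≤ Fq.card := Finset.card_le_card hFbFq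
  have hsplit : ∀ x y : ℕ, (min x y = x ∧ x ≤ y) ∨ (min x y = y ∧ y ≤ x) := by
    intro x y
    rcases le_total x y with h | h
    · exact Or.inl ⟨min_eq_left h, h⟩
    · exact Or.inr ⟨min_eq_right h, h⟩
  rcases hsplit (t - 1) Fa.card with ⟨h1, h1'⟩ | ⟨h1, h1'⟩ <;> rw [h1] at hrkP <;>
    rcases hsplit Fp.card (r + 1 - t) with ⟨h2, h2'⟩ | ⟨h2, h2'⟩ <;> rw [h2] at hrkP <;>
    rcases hsplit (t - 1) Fb.card with ⟨h3, h3'⟩ | ⟨h3, h3'⟩ <;> rw [h3] at hrkQ <;>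
    rcases hsplit Fq.card (r + 1 - t) with ⟨h4, h4'⟩ | ⟨h4, h4'⟩ <;> rw [h4] at hrkQ <;>
    omega
end
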